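/- arXiv:2406.13670 — 5 statements merged into one kernel-verified Lean document; each statement's English description precedes it below -/
import Mathlib

section
/- Let 2 ≤ t ≤ n, let 1 ≤ k ≤ ν(Γ_{n,t}), and set I = I_{n,t}^{[k]}. If m is the least common multiple of two minimal monomial generators of I with kt + 1 < deg(m) ≤ 2kt and deg(m) ≠ (k + 1)t, then the comparability graph of the open interval (1, m) of the lcm lattice L(I) is connected. -/
noncomputable section

open Finset MvPolynomial

/-- A simplicial complex on the vertex type `V`: a finite, nonempty collection of
finite subsets of `V` that is closed under taking subsets. -/
structure SimplicialComplex (V : Type) [DecidableEq V] : Type where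
  faces : Finset (Finset V)
  nonempty' : faces.Nonempty
  down_closed : ∀ ⦃F G : Finset V⦄, F ∈ faces → G ⊆ F → G ∈ faces

namespace SimplicialComplex

variable {V : Type} [DecidableEq V]

open scoped Classical in
/-- The facets: the maximal faces with respect to inclusion. -/
def facets (Δ : SimplicialComplex V) : Finset (Finset V) :=
  Δ.faces.filter fun F => ∀ G ∈ Δ.faces, F ⊆ G → F = G

/-- A matching: a set of pairwise disjoint facets. -/
def IsMatching (Δ : SimplicialComplex V) (M : Finset (Finset V)) : Prop :=
  M ⊆ Δ.facets ∧ ∀ F ∈ M, ∀ G ∈ M, F ≠ G → F ∩ G = ∅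

/-- The matching number `ν(Δ)`: the maximum cardinality of a matching. -/
def matchingNumber (Δ : SimplicialComplex V) : ℕ :=
  sSup {r : ℕ | ∃ M : Finset (Finset V), Δ.IsMatching M ∧ M.card = r}

/-- `F` is a leaf of the subcomplex generated by the facet set `S`: either `F` is
the only facet, or there is another facet `G` with `H ∩ F ⊆ G ∩ F` for all
facets `H ≠ F`. -/
def IsLeafIn (S : Finset (Finset V)) (F : Finset V) : Prop :=
  F ∈ S ∧ (S = {F} ∨ ∃ G ∈ S, G ≠ F ∧ ∀ H ∈ S, H ≠ F → H ∩ F ⊆ G ∩ F)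

/-- A simplicial forest: every nonempty subcomplex has a leaf (equivalently,
every connected component is a simplicial tree). -/
def IsForest (Δ : SimplicialComplex V) : Prop :=
  ∀ S ⊆ Δ.facets, S.Nonempty → ∃ F, IsLeafIn S F

/-- Connectedness: any two facets are joined by a chain of facets in which
consecutive facets intersect nontrivially. -/
def Connected (Δ : SimplicialComplex V) : Prop :=
  ∀ F ∈ Δ.facets, ∀ G ∈ Δ.facets,
    Relation.ReflTransGen
      (fun A B => A ∈ Δ.facets ∧ B ∈ Δ.facets ∧ (A ∩ B).Nonempty) F G

/-- A simplicial tree: a connected simplicial forest. -/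
def IsTree (Δ : SimplicialComplex V) : Prop := Δ.Connected ∧ Δ.IsForest

/-- A good leaf: a facet which is a leaf of every subcomplex containing it. -/
def IsGoodLeaf (Δ : SimplicialComplex V) (F : Finset V) : Prop :=
  F ∈ Δ.facets ∧ ∀ S ⊆ Δ.facets, F ∈ S → IsLeafIn S F

/-- Two disjoint facets `F`, `G` form a gap: the induced subcomplex on `F ∪ G`
has facet set exactly `{F, G}`. -/
def FormGap (Δ : SimplicialComplex V) (F G : Finset V) : Prop :=
  F ∈ Δ.facets ∧ G ∈ Δ.facets ∧ F ∩ G = ∅ ∧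
    ∀ H ∈ Δ.facets, H ⊆ F ∪ G → H = F ∨ H = G

/-- A restricted matching: a matching one of whose facets forms a gap with every
other facet of the matching. -/
def IsRestrictedMatching (Δ : SimplicialComplex V) (M : Finset (Finset V)) : Prop :=
  Δ.IsMatching M ∧ ∃ F ∈ M, ∀ G ∈ M, G ≠ F → Δ.FormGap F G

/-- The restricted matching number `ν₀(Δ)`. -/
def restrictedMatchingNumber (Δ : SimplicialComplex V) : ℕ :=
  sSup {r : ℕ | ∃ M : Finset (Finset V), Δ.IsRestrictedMatching M ∧ M.card = r}

/-- An induced matching: a matching `M` such that the facets contained in the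
union of the members of `M` are exactly the members of `M`. -/
def IsInducedMatching (Δ : SimplicialComplex V) (M : Finset (Finset V)) : Prop :=
  Δ.IsMatching M ∧ ∀ H ∈ Δ.facets, H ⊆ M.biUnion id → H ∈ M

/-- The induced matching number `ν₁(Δ)`. -/
def inducedMatchingNumber (Δ : SimplicialComplex V) : ℕ :=
  sSup {r : ℕ | ∃ M : Finset (Finset V), Δ.IsInducedMatching M ∧ M.card = r}

/-- A proper chain of length `n` between the facets `F` and `G`. -/
def ProperChain (Δ : SimplicialComplex V) (F G : Finset V) (n : ℕ) : Prop :=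
  ∃ c : ℕ → Finset V, c 0 = F ∧ c n = G ∧ (∀ i ≤ n, c i ∈ Δ.facets) ∧
    ∀ i < n, (c i ∩ c (i + 1)).card = (c (i + 1)).card - 1

/-- The distance between two facets: the minimal length of a proper chain. -/
def dist (Δ : SimplicialComplex V) (F G : Finset V) : ℕ :=
  sInf {n : ℕ | Δ.ProperChain F G n}

/-- The intersection property for a pure complex whose facets have cardinality
`t` (`= d + 1`): it is connected in codimension 1, and any two facets `F`, `G`
with `|F ∩ G| = t - k` (`1 ≤ k ≤ t`) satisfy `dist(F, G) = k`. -/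
def HasIntersectionProperty (Δ : SimplicialComplex V) (t : ℕ) : Prop :=
  (∀ F ∈ Δ.facets, F.card = t) ∧
    (∀ F ∈ Δ.facets, ∀ G ∈ Δ.facets, ∃ n, Δ.ProperChain F G n) ∧
    ∀ F ∈ Δ.facets, ∀ G ∈ Δ.facets, ∀ k, 1 ≤ k → k ≤ t →
      (F ∩ G).card = t - k → Δ.dist F G = k

end SimplicialComplex

/-- The simplicial complex generated by a finite family of faces. -/
def ofFacets {V : Type} [DecidableEq V] (ℱ : Finset (Finset V)) :
    SimplicialComplex V where
  faces := insert ∅ (ℱ.biUnion Finset.powerset)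
  nonempty' := ⟨∅, Finset.mem_insert_self _ _⟩
  down_closed := by
    intro F G hF hGF
    rcases Finset.mem_insert.mp hF with h | h
    · subst h
      exact Finset.mem_insert.mpr <| Or.inl (Finset.subset_empty.mp hGF)
    · rcases Finset.mem_biUnion.mp h with ⟨A, hA, hFA⟩
      exact Finset.mem_insert.mpr <| Or.inr <| Finset.mem_biUnion.mpr
        ⟨A, hA, Finset.mem_powerset.mpr (hGF.trans (Finset.mem_powerset.mp hFA))⟩

/-- The ideal of `K[x_v : v ∈ V]` generated by the products
`x_{F₁} ⋯ x_{F_k}` over all `k`-matchings `{F₁, …, F_k}` taken from the facet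
set `ℱ`.  For `ℱ = ℱ(Δ)` this is the `k`-th squarefree power `I(Δ)^{[k]}` of the
facet ideal `I(Δ)` (and the facet ideal itself for `k = 1`). -/
def matchPow (K : Type) [Field K] {V : Type} [DecidableEq V]
    (ℱ : Finset (Finset V)) (k : ℕ) : Ideal (MvPolynomial V K) :=
  Ideal.span {p | ∃ M : Finset (Finset V), M ⊆ ℱ ∧
    (∀ F ∈ M, ∀ G ∈ M, F ≠ G → F ∩ G = ∅) ∧ M.card = k ∧
    p = ∏ F ∈ M, ∏ v ∈ F, (X v : MvPolynomial V K)}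

/-- The `k`-th squarefree power `I(Δ)^{[k]}` of the facet ideal of `Δ`. -/
def sqfreePower (K : Type) [Field K] {V : Type} [DecidableEq V]
    (Δ : SimplicialComplex V) (k : ℕ) : Ideal (MvPolynomial V K) :=
  matchPow K Δ.facets k

/-- `p` is a monomial with coefficient `1`. -/
def IsMonomialOne {K : Type} [Field K] {V : Type} (p : MvPolynomial V K) : Prop :=
  ∃ d : V →₀ ℕ, p = monomial d 1

/-- `u` is a minimal monomial generator of the monomial ideal `I`: `u` is a
monomial of `I` which is not strictly divisible by any monomial of `I`. -/
def IsMinGen {K : Type} [Field K] {V : Type} (I : Ideal (MvPolynomial V K))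
    (u : MvPolynomial V K) : Prop :=
  IsMonomialOne u ∧ u ∈ I ∧
    ∀ v : MvPolynomial V K, IsMonomialOne v → v ∈ I → v ∣ u → v = u

/-- A monomial ideal `I` has linear quotients: its minimal monomial generators
can be listed as `f₁, …, f_m` so that each colon ideal
`(f₁, …, f_{i-1}) : (f_i)` is generated by a subset of the variables. -/
def HasLinearQuotients {K : Type} [Field K] {V : Type}
    (I : Ideal (MvPolynomial V K)) : Prop :=
  ∃ L : List (MvPolynomial V K), L.Nodup ∧ (∀ u, u ∈ L ↔ IsMinGen I u) ∧
    ∀ i : ℕ, ∀ hi : i < L.length, 1 ≤ i →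
      ∃ s : Set V,
        Submodule.colon (Ideal.span {q | q ∈ L.take i}) (Ideal.span {L.get ⟨i, hi⟩}) =
          Ideal.span ((fun v => (X v : MvPolynomial V K)) '' s)

/-- The degree of the monomial with exponent vector `d`. -/
def degOf {V : Type} (d : V →₀ ℕ) : ℕ := d.sum fun _ n => n

/-- The edge relation of the induced graph `G_I^{(u,v)}` of Bigdeli–Herzog–Zheng,
for a monomial ideal `I` generated in degree `d`, where `m` is the exponent
vector of `lcm(u, v)`: two minimal monomial generators (identified with their
exponent vectors) dividing `lcm(u, v)` are adjacent when their lcm has degree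
`d + 1`. -/
def EdgeRel (K : Type) [Field K] {V : Type} [DecidableEq V]
    (I : Ideal (MvPolynomial V K)) (d : ℕ) (m : V →₀ ℕ) (u v : V →₀ ℕ) : Prop :=
  IsMinGen I (monomial u (1 : K)) ∧ IsMinGen I (monomial v (1 : K)) ∧
    u ≤ m ∧ v ≤ m ∧ degOf (u ⊔ v) = d + 1

/-- The combinatorial criterion of Bigdeli–Herzog–Zheng for a monomial ideal `I`
generated in degree `d` to be linearly related: any two minimal monomial
generators `u`, `v` are connected by a path in `G_I^{(u,v)}`. -/
def LinearlyRelatedVia (K : Type) [Field K] {V : Type} [DecidableEq V]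
    (I : Ideal (MvPolynomial V K)) (d : ℕ) : Prop :=
  ∀ a b : V →₀ ℕ, IsMinGen I (monomial a (1 : K)) → IsMinGen I (monomial b (1 : K)) →
    Relation.ReflTransGen (EdgeRel K I d (a ⊔ b)) a b

/-- The `t`-path simplicial tree `Γ_{n,t}` of the path graph `P_n` on the
vertices `1, …, n`: its facets are the intervals `F_i = {i, …, i + t - 1}` for
`1 ≤ i ≤ n - t + 1`. -/
def pathFacets (n t : ℕ) : Finset (Finset ℕ) :=
  (Finset.Icc 1 (n - t + 1)).image fun i => Finset.Icc i (i + t - 1)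

/-- The `t`-path simplicial tree `Γ_{n,t}` of the path graph `P_n`. -/
def pathComplex (n t : ℕ) : SimplicialComplex ℕ := ofFacets (pathFacets n t)

/-- The lcm lattice of a monomial ideal, realized by exponent vectors: the
least common multiples of finite subsets of the minimal monomial generators
(the lcm of the empty subset being `0`, the exponent vector of `1`); the order
is divisibility, i.e. the pointwise order on exponent vectors. -/
def lcmLattice (K : Type) [Field K] {V : Type} [DecidableEq V]
    (I : Ideal (MvPolynomial V K)) : Set (V →₀ ℕ) :=
  {d | ∃ S : Finset (V →₀ ℕ), (∀ e ∈ S, IsMinGen I (monomial e (1 : K))) ∧ d = S.sup id}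

/-- The open interval `(1, m)` of the lcm lattice of `I`. -/
def openInterval (K : Type) [Field K] {V : Type} [DecidableEq V]
    (I : Ideal (MvPolynomial V K)) (m : V →₀ ℕ) : Set (V →₀ ℕ) :=
  {v | v ∈ lcmLattice K I ∧ v ≠ 0 ∧ v ≠ m ∧ v ≤ m}


namespace Stmt11Aux

/-! ### Indicator finsupps -/

/-- Indicator exponent vector of a finite set. -/
def ind (S : Finset ℕ) : ℕ →₀ ℕ := ∑ v ∈ S, Finsupp.single v 1

lemma ind_apply (S : Finset ℕ) (x : ℕ) : ind S x = if x ∈ S then 1 else 0 := by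
  classical
  rw [ind, Finsupp.finset_sum_apply]
  rw [Finset.sum_congr rfl (fun v _ => Finsupp.single_apply (a := v) (b := (1:ℕ)) (a' := x))]
  simp [Finset.sum_ite_eq]

lemma ind_le_iff {S T : Finset ℕ} : ind S ≤ ind T ↔ S ⊆ T := by
  rw [Finsupp.le_def]
  constructor
  · intro h x hx
    have := h x
    rw [ind_apply, ind_apply, if_pos hx] at this
    by_contra hxT
    rw [if_neg hxT] at this; omega
  · intro h x
    rw [ind_apply, ind_apply]
    split_ifs with h1 h2
    · exact le_refl _
    · exact absurd (h h1) h2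
    · omega
    · omega

lemma ind_injective : Function.Injective ind := by
  intro S T h
  exact Finset.Subset.antisymm (ind_le_iff.mp h.le) (ind_le_iff.mp h.ge)

lemma ind_sup (S T : Finset ℕ) : ind S ⊔ ind T = ind (S ∪ T) := by
  ext x
  rw [Finsupp.sup_apply, ind_apply, ind_apply, ind_apply]
  by_cases hS : x ∈ S <;> by_cases hT : x ∈ T <;>
    simp [hS, hT, Finset.mem_union]

lemma ind_ne_zero {S : Finset ℕ} (h : S.Nonempty) : ind S ≠ 0 := by
  obtain ⟨x, hx⟩ := h
  intro h0
  have := congrArg (fun f : ℕ →₀ ℕ => f x) h0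
  simp only [ind_apply, if_pos hx] at this
  simp at this

lemma degOf_add (d e : ℕ →₀ ℕ) : degOf (d + e) = degOf d + degOf e := by
  unfold degOf
  exact Finsupp.sum_add_index' (fun _ => rfl) (fun _ _ _ => rfl)

lemma degOf_single (v : ℕ) (c : ℕ) : degOf (Finsupp.single v c) = c := by
  unfold degOf
  exact Finsupp.sum_single_index rfl

lemma degOf_ind (S : Finset ℕ) : degOf (ind S) = S.card := by
  classical
  induction S using Finset.induction_on with
  | empty => simp [ind, degOf]
  | @insert a s h ih =>
    rw [ind, Finset.sum_insert h, degOf_add, degOf_single, ← ind, ih,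
      Finset.card_insert_of_notMem h]
    omega

lemma ind_eq_zero_iff {S : Finset ℕ} : ind S = 0 ↔ S = ∅ := by
  constructor
  · intro h
    by_contra hne
    exact ind_ne_zero (Finset.nonempty_iff_ne_empty.mpr hne) h
  · rintro rfl; simp [ind]

/-! ### Monomial span lemmas -/

variable {K : Type} [Field K]

lemma prod_X_eq (S : Finset ℕ) : (∏ v ∈ S, (X v : MvPolynomial ℕ K)) = monomial (ind S) 1 := by
  classical
  induction S using Finset.induction_on with
  | empty => simp [ind, monomial_zero']
  | @insert a s h ih =>
    rw [Finset.prod_insert h, ih]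
    have hX : (X a : MvPolynomial ℕ K) = monomial (Finsupp.single a 1) 1 := rfl
    rw [hX, monomial_mul, one_mul]
    congr 1
    simp only [ind, Finset.sum_insert h]

lemma support_span_subset {S : Set (MvPolynomial ℕ K)} {P : (ℕ →₀ ℕ) → Prop}
    (hS : ∀ q ∈ S, ∀ d ∈ q.support, ∃ g, P g ∧ g ≤ d)
    {p : MvPolynomial ℕ K} (hp : p ∈ Ideal.span S) :
    ∀ d ∈ p.support, ∃ g, P g ∧ g ≤ d := by
  refine Submodule.span_induction (p := fun x _ => ∀ d ∈ x.support, ∃ g, P g ∧ g ≤ d)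
    (fun q hq => hS q hq) (by simp) ?_ ?_ hp
  · intro x y _ _ hx hy d hd
    have := MvPolynomial.support_add hd
    rw [Finset.mem_union] at this
    rcases this with h | h
    · exact hx d h
    · exact hy d h
  · intro r x _ hx d hd
    rw [smul_eq_mul] at hd
    have := MvPolynomial.support_mul r x hd
    rw [Finset.mem_add] at this
    obtain ⟨a, _, c, hc, hd'⟩ := this
    obtain ⟨g, hg, hgc⟩ := hx c hc
    exact ⟨g, hg, le_trans (le_trans hgc (le_add_self)) (le_of_eq hd')⟩

lemma monomial_one_dvd_iff {d e : ℕ →₀ ℕ} :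
    (monomial d (1:K)) ∣ (monomial e (1:K)) ↔ d ≤ e := by
  classical
  constructor
  · intro h
    have hmem : (monomial e (1:K)) ∈ Ideal.span {(monomial d (1:K))} :=
      Ideal.mem_span_singleton.mpr h
    have := support_span_subset (S := {(monomial d (1:K))}) (P := fun g => g = d)
      (by
        rintro q rfl d' hd'
        rw [support_monomial, if_neg (one_ne_zero)] at hd'
        rw [Finset.mem_singleton] at hd'
        exact ⟨d, rfl, le_of_eq hd'.symm⟩) hmem
    have he : e ∈ (monomial e (1:K)).support := by
      rw [support_monomial, if_neg (one_ne_zero)]; exact Finset.mem_singleton_self _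
    obtain ⟨g, rfl, hge⟩ := this e he
    exact hge
  · intro h
    refine ⟨monomial (e - d) 1, ?_⟩
    rw [monomial_mul, one_mul, add_tsub_cancel_of_le h]

/-! ### Path facets and matchings -/

lemma mem_pathFacets {n t : ℕ} {F : Finset ℕ} :
    F ∈ pathFacets n t ↔ ∃ i, 1 ≤ i ∧ i ≤ n - t + 1 ∧ F = Finset.Icc i (i + t - 1) := by
  unfold pathFacets
  rw [Finset.mem_image]
  constructor
  · rintro ⟨i, hi, rfl⟩
    rw [Finset.mem_Icc] at hi
    exact ⟨i, hi.1, hi.2, rfl⟩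
  · rintro ⟨i, h1, h2, rfl⟩
    exact ⟨i, Finset.mem_Icc.mpr ⟨h1, h2⟩, rfl⟩

lemma card_pathFacet {n t : ℕ} (ht : 1 ≤ t) {F : Finset ℕ} (hF : F ∈ pathFacets n t) :
    F.card = t := by
  obtain ⟨i, h1, _, rfl⟩ := mem_pathFacets.mp hF
  rw [Nat.card_Icc]
  omega

lemma pathFacet_nonempty {n t : ℕ} (ht : 1 ≤ t) {F : Finset ℕ} (hF : F ∈ pathFacets n t) :
    F.Nonempty := by
  rw [← Finset.card_pos, card_pathFacet ht hF]; omega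

lemma facets_pathComplex {n t : ℕ} (ht : 1 ≤ t) (htn : t ≤ n) :
    (pathComplex n t).facets = pathFacets n t := by
  classical
  have hmemfaces : ∀ F ∈ pathFacets n t, F ∈ (pathComplex n t).faces := by
    intro F hF
    exact Finset.mem_insert.mpr <| Or.inr <| Finset.mem_biUnion.mpr
      ⟨F, hF, Finset.mem_powerset.mpr (le_refl F)⟩
  ext F
  unfold SimplicialComplex.facets
  rw [Finset.mem_filter]
  constructor
  · rintro ⟨hF, hmax⟩
    rcases Finset.mem_insert.mp hF with h | h
    · exfalso
      subst h
      have h1 : Finset.Icc 1 (1 + t - 1) ∈ pathFacets n t :=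
        mem_pathFacets.mpr ⟨1, le_refl _, by omega, rfl⟩
      have := hmax _ (hmemfaces _ h1) (Finset.empty_subset _)
      have hne := pathFacet_nonempty ht h1
      rw [← this] at hne
      exact Finset.not_nonempty_empty hne
    · obtain ⟨A, hA, hFA⟩ := Finset.mem_biUnion.mp h
      rw [Finset.mem_powerset] at hFA
      have := hmax A (hmemfaces A hA) hFA
      rw [this]; exact hA
  · intro hF
    refine ⟨hmemfaces F hF, ?_⟩
    intro G hG hFG
    rcases Finset.mem_insert.mp hG with h | h
    · subst h
      exact Finset.subset_empty.mp hFG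
    · obtain ⟨A, hA, hGA⟩ := Finset.mem_biUnion.mp h
      rw [Finset.mem_powerset] at hGA
      have hFA : F ⊆ A := hFG.trans hGA
      have : F = A := Finset.eq_of_subset_of_card_le hFA
        (by rw [card_pathFacet ht hF, card_pathFacet ht hA])
      exact Finset.Subset.antisymm hFG (by rw [this]; exact hGA)

/-- A `k`-matching of `t`-intervals in `[1,n]`. -/
def IsGenSet (n t k : ℕ) (M : Finset (Finset ℕ)) : Prop :=
  M ⊆ pathFacets n t ∧ (∀ F ∈ M, ∀ G ∈ M, F ≠ G → F ∩ G = ∅) ∧ M.card = k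

lemma card_biUnion_genset {n t k : ℕ} (ht : 1 ≤ t) {M : Finset (Finset ℕ)}
    (hM : IsGenSet n t k M) : (M.biUnion id).card = k * t := by
  classical
  change (M.biUnion (fun F => F)).card = k * t
  rw [Finset.card_biUnion (fun F hF G hG hne =>
    Finset.disjoint_iff_inter_eq_empty.mpr (hM.2.1 F hF G hG hne))]
  rw [Finset.sum_congr rfl (fun F hF => card_pathFacet ht (hM.1 hF))]
  rw [Finset.sum_const, hM.2.2, smul_eq_mul]

lemma genset_prod {n t k : ℕ} {M : Finset (Finset ℕ)} (hM : IsGenSet n t k M) :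
    (∏ F ∈ M, ∏ v ∈ F, (X v : MvPolynomial ℕ K)) = monomial (ind (M.biUnion id)) 1 := by
  classical
  rw [show (M.biUnion id) = M.biUnion (fun F => F) from rfl]
  rw [← Finset.prod_biUnion (fun F hF G hG hne =>
    Finset.disjoint_iff_inter_eq_empty.mpr (hM.2.1 F hF G hG hne))]
  exact prod_X_eq _

/-- Membership in the matching-power ideal forces divisibility by a matching monomial. -/
lemma mem_matchPow_support {n t k : ℕ} {p : MvPolynomial ℕ K}
    (hp : p ∈ matchPow K (pathFacets n t) k) :
    ∀ d ∈ p.support, ∃ M, IsGenSet n t k M ∧ ind (M.biUnion id) ≤ d := by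
  classical
  unfold matchPow at hp
  intro d hd
  have key := support_span_subset
    (P := fun g => ∃ M, IsGenSet n t k M ∧ g = ind (M.biUnion id)) ?_ hp d hd
  · obtain ⟨g, ⟨M, hM, rfl⟩, hle⟩ := key
    exact ⟨M, hM, hle⟩
  · rintro q ⟨M, hM1, hM2, hM3, rfl⟩ e he
    have hM : IsGenSet n t k M := ⟨hM1, hM2, hM3⟩
    rw [genset_prod hM, support_monomial, if_neg one_ne_zero, Finset.mem_singleton] at he
    exact ⟨ind (M.biUnion id), ⟨M, hM, rfl⟩, le_of_eq he.symm⟩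

lemma genset_mem_matchPow {n t k : ℕ} {M : Finset (Finset ℕ)} (hM : IsGenSet n t k M) :
    (monomial (ind (M.biUnion id)) (1:K)) ∈ matchPow K (pathFacets n t) k := by
  unfold matchPow
  apply Ideal.subset_span
  exact ⟨M, hM.1, hM.2.1, hM.2.2, (genset_prod hM).symm⟩

lemma isMinGen_genset {n t k : ℕ} (ht : 1 ≤ t) {M : Finset (Finset ℕ)}
    (hM : IsGenSet n t k M) :
    IsMinGen (matchPow K (pathFacets n t) k) (monomial (ind (M.biUnion id)) (1:K)) := by
  classical
  refine ⟨⟨_, rfl⟩, genset_mem_matchPow hM, ?_⟩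
  rintro v ⟨d', rfl⟩ hv hdvd
  obtain ⟨M'', hM'', hle⟩ := by
    refine mem_matchPow_support hv d' ?_
    rw [support_monomial, if_neg one_ne_zero]; exact Finset.mem_singleton_self _
  have hd'le : d' ≤ ind (M.biUnion id) := monomial_one_dvd_iff.mp hdvd
  have hsub : M''.biUnion id ⊆ M.biUnion id := ind_le_iff.mp (hle.trans hd'le)
  have hcards : (M.biUnion id).card ≤ (M''.biUnion id).card := by
    rw [card_biUnion_genset ht hM, card_biUnion_genset ht hM'']
  have heq : M''.biUnion id = M.biUnion id := Finset.eq_of_subset_of_card_le hsub hcards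
  rw [heq] at hle
  have : d' = ind (M.biUnion id) := le_antisymm hd'le hle
  rw [this]

lemma minGen_char {n t k : ℕ} (ht : 1 ≤ t) {a : ℕ →₀ ℕ}
    (ha : IsMinGen (matchPow K (pathFacets n t) k) (monomial a (1:K))) :
    ∃ M, IsGenSet n t k M ∧ a = ind (M.biUnion id) := by
  classical
  obtain ⟨M, hM, hle⟩ := by
    refine mem_matchPow_support ha.2.1 a ?_
    rw [support_monomial, if_neg one_ne_zero]; exact Finset.mem_singleton_self _
  have := ha.2.2 (monomial (ind (M.biUnion id)) 1) ⟨_, rfl⟩ (genset_mem_matchPow hM)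
    (monomial_one_dvd_iff.mpr hle)
  have heq : ind (M.biUnion id) = a := monomial_left_injective one_ne_zero this
  exact ⟨M, hM, heq.symm⟩

/-! ### Endpoint data for matchings -/

/-- Endpoint data: a sorted `k`-tuple of left endpoints of a `k`-matching of
`t`-intervals within `[1, n]`. -/
structure ED (n t k : ℕ) where
  x : Fin k → ℕ
  gap : ∀ i j : Fin k, i < j → x i + t ≤ x j
  lo : ∀ i, 1 ≤ x i
  hi : ∀ i, x i ≤ n - t + 1

namespace ED

variable {n t k : ℕ}

/-- The `i`-th interval. -/
def F (d : ED n t k) (i : Fin k) : Finset ℕ := Finset.Icc (d.x i) (d.x i + t - 1)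

/-- The support. -/
def U (d : ED n t k) : Finset ℕ := Finset.univ.biUnion d.F

/-- The matching. -/
def M (d : ED n t k) : Finset (Finset ℕ) := Finset.univ.image d.F

lemma Icc_disj (ht : 1 ≤ t) {a b : ℕ} (h : a + t ≤ b) :
    Finset.Icc a (a + t - 1) ∩ Finset.Icc b (b + t - 1) = ∅ := by
  ext c
  simp only [Finset.mem_inter, Finset.mem_Icc, Finset.notMem_empty, iff_false, not_and]
  omega

lemma F_disj (ht : 1 ≤ t) (d : ED n t k) {i j : Fin k} (hij : i ≠ j) : d.F i ∩ d.F j = ∅ := by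
  rcases lt_or_gt_of_ne hij with h | h
  · exact Icc_disj ht (d.gap i j h)
  · rw [Finset.inter_comm]; exact Icc_disj ht (d.gap j i h)

lemma mem_F_self (ht : 1 ≤ t) (d : ED n t k) (i : Fin k) : d.x i ∈ d.F i := by
  rw [F, Finset.mem_Icc]; omega

lemma F_injective (ht : 1 ≤ t) (d : ED n t k) : Function.Injective d.F := by
  intro i j h
  by_contra hij
  have h1 := d.F_disj ht hij
  have h2 : d.x j ∈ d.F i ∩ d.F j := by
    rw [h, Finset.inter_self]; exact mem_F_self ht d j
  rw [h1] at h2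
  exact Finset.notMem_empty _ h2

lemma isGenSet (ht : 1 ≤ t) (d : ED n t k) : IsGenSet n t k d.M := by
  refine ⟨?_, ?_, ?_⟩
  · intro F hF
    obtain ⟨i, _, rfl⟩ := Finset.mem_image.mp hF
    exact mem_pathFacets.mpr ⟨d.x i, d.lo i, d.hi i, rfl⟩
  · intro F hF G hG hne
    obtain ⟨i, _, rfl⟩ := Finset.mem_image.mp hF
    obtain ⟨j, _, rfl⟩ := Finset.mem_image.mp hG
    exact d.F_disj ht (fun h => hne (by rw [h]))
  · rw [M, Finset.card_image_of_injective _ (d.F_injective ht), Finset.card_univ,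
      Fintype.card_fin]

lemma biUnion_M (d : ED n t k) : d.M.biUnion id = d.U := by
  rw [M, U]
  exact Finset.image_biUnion

lemma card_U (ht : 1 ≤ t) (d : ED n t k) : d.U.card = k * t := by
  rw [← d.biUnion_M]
  exact card_biUnion_genset ht (d.isGenSet ht)

lemma isMinGen (ht : 1 ≤ t) (d : ED n t k) :
    IsMinGen (matchPow K (pathFacets n t) k) (monomial (ind d.U) (1:K)) := by
  rw [← d.biUnion_M]
  exact isMinGen_genset ht (d.isGenSet ht)

lemma U_nonempty (ht : 1 ≤ t) (hk : 1 ≤ k) (d : ED n t k) : d.U.Nonempty := by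
  refine ⟨d.x ⟨0, hk⟩, ?_⟩
  rw [U, Finset.mem_biUnion]
  exact ⟨⟨0, hk⟩, Finset.mem_univ _, mem_F_self ht d _⟩

lemma F_subset_U (d : ED n t k) (i : Fin k) : d.F i ⊆ d.U := by
  intro c hc
  rw [U, Finset.mem_biUnion]
  exact ⟨i, Finset.mem_univ _, hc⟩

end ED

lemma toED {n t k : ℕ} (ht : 1 ≤ t) {M : Finset (Finset ℕ)} (hM : IsGenSet n t k M) :
    ∃ d : ED n t k, d.U = M.biUnion id := by
  classical
  set φ : ℕ → Finset ℕ := fun i => Finset.Icc i (i + t - 1) with hφ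
  have hφinj : Function.Injective φ := by
    intro i j h
    have hi : i ∈ φ i := by simp only [φ, Finset.mem_Icc]; omega
    have hj : j ∈ φ j := by simp only [φ, Finset.mem_Icc]; omega
    rw [h] at hi
    rw [← h] at hj
    simp only [φ, Finset.mem_Icc] at hi hj
    omega
  set E : Finset ℕ := (Finset.Icc 1 (n - t + 1)).filter (fun i => φ i ∈ M) with hE
  have hEim : E.image φ = M := by
    apply Finset.Subset.antisymm
    · intro F hF
      obtain ⟨i, hi, rfl⟩ := Finset.mem_image.mp hF
      exact (Finset.mem_filter.mp hi).2
    · intro F hF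
      obtain ⟨i, h1, h2, rfl⟩ := mem_pathFacets.mp (hM.1 hF)
      exact Finset.mem_image.mpr
        ⟨i, Finset.mem_filter.mpr ⟨Finset.mem_Icc.mpr ⟨h1, h2⟩, hF⟩, rfl⟩
  have hcard : E.card = k := by
    have := Finset.card_image_of_injective E hφinj
    rw [hEim, hM.2.2] at this
    omega
  set σ := E.orderIsoOfFin hcard with hσ
  have hmemE : ∀ i : Fin k, (σ i : ℕ) ∈ E := fun i => (σ i).2
  have hmemM : ∀ i : Fin k, φ (σ i : ℕ) ∈ M := fun i => (Finset.mem_filter.mp (hmemE i)).2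
  have hrange : ∀ i : Fin k, 1 ≤ (σ i : ℕ) ∧ (σ i : ℕ) ≤ n - t + 1 := by
    intro i
    have := (Finset.mem_filter.mp (hmemE i)).1
    rwa [Finset.mem_Icc] at this
  refine ⟨⟨fun i => (σ i : ℕ), ?_, fun i => (hrange i).1, fun i => (hrange i).2⟩, ?_⟩
  · intro i j hij
    have hlt : ((σ i : ℕ)) < (σ j : ℕ) := by
      have := σ.strictMono hij
      exact this
    have hneq : φ (σ i : ℕ) ≠ φ (σ j : ℕ) := fun h => (Nat.ne_of_lt hlt) (hφinj h)
    have hdisj := hM.2.1 _ (hmemM i) _ (hmemM j) hneq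
    show (σ i : ℕ) + t ≤ (σ j : ℕ)
    by_contra hcon
    have hmm : (σ j : ℕ) ∈ φ (σ i : ℕ) ∩ φ (σ j : ℕ) := by
      rw [Finset.mem_inter]
      constructor
      · simp only [φ, Finset.mem_Icc]; omega
      · simp only [φ, Finset.mem_Icc]; omega
    rw [hdisj] at hmm
    exact Finset.notMem_empty _ hmm
  · ext c
    simp only [ED.U, ED.F, Finset.mem_biUnion, Finset.mem_univ, true_and, id]
    constructor
    · rintro ⟨i, hc⟩
      exact ⟨φ (σ i : ℕ), hmemM i, hc⟩
    · rintro ⟨F, hF, hc⟩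
      rw [← hEim] at hF
      obtain ⟨e, heE, rfl⟩ := Finset.mem_image.mp hF
      refine ⟨σ.symm ⟨e, heE⟩, ?_⟩
      have : (σ (σ.symm ⟨e, heE⟩) : ℕ) = e := by rw [OrderIso.apply_symm_apply]
      rw [this]
      exact hc

/-! ### The comparability relation and connectivity -/

/-- The edge relation of the comparability graph of the open interval. -/
abbrev Rel (K : Type) [Field K] (n t k : ℕ) (m : ℕ →₀ ℕ) (p q : ℕ →₀ ℕ) : Prop :=
  p ∈ openInterval K (matchPow K (pathFacets n t) k) m ∧
    q ∈ openInterval K (matchPow K (pathFacets n t) k) m ∧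
    p ≠ q ∧ (p ≤ q ∨ q ≤ p)

lemma rel_symm {K : Type} [Field K] {n t k : ℕ} {m p q : ℕ →₀ ℕ}
    (h : Rel K n t k m p q) : Rel K n t k m q p :=
  ⟨h.2.1, h.1, (h.2.2.1).symm, (h.2.2.2).symm⟩

lemma rtg_symm {α : Type*} {R : α → α → Prop} (hsym : ∀ a b, R a b → R b a) {a b : α}
    (h : Relation.ReflTransGen R a b) : Relation.ReflTransGen R b a := by
  induction h with
  | refl => exact Relation.ReflTransGen.refl
  | tail _ h2 ih => exact Relation.ReflTransGen.head (hsym _ _ h2) ih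

variable {K : Type} [Field K] {n t k : ℕ}

lemma gen_in_interval (ht : 1 ≤ t) (hk : 1 ≤ k) {Mstar : Finset ℕ}
    (hD : k * t + 1 < Mstar.card) (d : ED n t k) (hsub : d.U ⊆ Mstar) :
    ind d.U ∈ openInterval K (matchPow K (pathFacets n t) k) (ind Mstar) := by
  refine ⟨⟨{ind d.U}, ?_, ?_⟩, ?_, ?_, ?_⟩
  · intro e he
    rw [Finset.mem_singleton] at he
    subst he
    exact d.isMinGen ht
  · exact (Finset.sup_singleton).symm
  · exact ind_ne_zero (d.U_nonempty ht hk)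
  · intro h
    have h2 := ind_injective h
    have hc := d.card_U ht
    rw [h2] at hc
    omega
  · exact ind_le_iff.mpr hsub

lemma sup_in_interval (ht : 1 ≤ t) (hk : 1 ≤ k) {Mstar : Finset ℕ}
    (d1 d2 : ED n t k) (h1 : d1.U ⊆ Mstar) (h2 : d2.U ⊆ Mstar)
    (hne : d1.U ∪ d2.U ≠ Mstar) :
    ind (d1.U ∪ d2.U) ∈ openInterval K (matchPow K (pathFacets n t) k) (ind Mstar) := by
  refine ⟨⟨{ind d1.U, ind d2.U}, ?_, ?_⟩, ?_, ?_, ?_⟩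
  · intro e he
    rcases Finset.mem_insert.mp he with h | h
    · subst h; exact d1.isMinGen ht
    · rw [Finset.mem_singleton] at h; subst h; exact d2.isMinGen ht
  · rw [Finset.sup_insert, Finset.sup_singleton]
    exact (ind_sup _ _).symm
  · exact ind_ne_zero ((d1.U_nonempty ht hk).mono Finset.subset_union_left)
  · exact fun h => hne (ind_injective h)
  · exact ind_le_iff.mpr (Finset.union_subset h1 h2)

lemma step (ht : 1 ≤ t) (hk : 1 ≤ k) {Mstar : Finset ℕ}
    (hD : k * t + 1 < Mstar.card)
    (d1 d2 : ED n t k) (h1 : d1.U ⊆ Mstar) (h2 : d2.U ⊆ Mstar)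
    (hne : d1.U ∪ d2.U ≠ Mstar) :
    Relation.ReflTransGen (Rel K n t k (ind Mstar)) (ind d1.U) (ind d2.U) := by
  by_cases heq : d1.U = d2.U
  · rw [heq]
  · have hmem1 := gen_in_interval (K := K) ht hk hD d1 h1
    have hmem2 := gen_in_interval (K := K) ht hk hD d2 h2
    have hmemsup := sup_in_interval (K := K) ht hk d1 d2 h1 h2 hne
    have key : ∀ da db : ED n t k, da.U ⊆ Mstar → da.U ≠ db.U →
        ind da.U ≠ ind (da.U ∪ db.U) := by
      intro da db hda hab h
      have h2' := ind_injective h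
      have hsub : db.U ⊆ da.U := by
        intro c hc
        have : c ∈ da.U ∪ db.U := Finset.mem_union_right _ hc
        rwa [← h2'] at this
      exact hab (Finset.eq_of_subset_of_card_le hsub
        (by rw [da.card_U ht, db.card_U ht])).symm
    have hne1 : ind d1.U ≠ ind (d1.U ∪ d2.U) := key d1 d2 h1 heq
    have hne2 : ind d2.U ≠ ind (d2.U ∪ d1.U) := key d2 d1 h2 (Ne.symm heq)
    rw [Finset.union_comm] at hne2
    refine Relation.ReflTransGen.tail (b := ind (d1.U ∪ d2.U))
      (Relation.ReflTransGen.single ?_) ?_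
    · exact ⟨hmem1, hmemsup, hne1, Or.inl (ind_le_iff.mpr Finset.subset_union_left)⟩
    · exact ⟨hmemsup, hmem2, (Ne.symm hne2), Or.inr (ind_le_iff.mpr Finset.subset_union_right)⟩

/-- The ℓ¹ distance between two endpoint tuples. -/
def mu (e f : ED n t k) : ℕ := ∑ i : Fin k, ((e.x i - f.x i) + (f.x i - e.x i))

lemma mu_comm (e f : ED n t k) : mu e f = mu f e := by
  unfold mu
  exact Finset.sum_congr rfl (fun i _ => by omega)

lemma advance (ht : 2 ≤ t) (hk : 1 ≤ k) {Mstar : Finset ℕ}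
    (hD : k * t + 1 < Mstar.card) (hD3 : Mstar.card ≠ (k + 1) * t)
    (e f : ED n t k) (he : e.U ⊆ Mstar) (hf : f.U ⊆ Mstar) (j : Fin k)
    (hj1 : ∀ i, i < j → e.x i = f.x i) (hj2 : f.x j < e.x j) :
    ∃ e' : ED n t k, e'.U ⊆ Mstar ∧ mu e' f < mu e f ∧
      Relation.ReflTransGen (Rel K n t k (ind Mstar)) (ind e.U) (ind e'.U) := by
  classical
  have ht1 : 1 ≤ t := by omega
  have hFjsub : f.F j ⊆ Mstar := (f.F_subset_U j).trans hf
  -- the general construction: update the `j`-th left endpoint to `v`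
  have build : ∀ v : ℕ, 1 ≤ v → v ≤ n - t + 1 → f.x j ≤ v → v < e.x j →
      ∃ e' : ED n t k, e'.x = Function.update e.x j v := by
    intro v hv1 hv2 hvf hve
    refine ⟨⟨Function.update e.x j v, ?_, ?_, ?_⟩, rfl⟩
    · intro i i' hii'
      by_cases hi : i = j
      · subst hi
        have hi' : i' ≠ i := (ne_of_lt hii').symm
        rw [Function.update_self, Function.update_of_ne hi']
        have := e.gap i i' hii'
        omega
      · by_cases hi' : i' = j
        · subst hi'
          rw [Function.update_of_ne hi, Function.update_self]
          have hxi : e.x i = f.x i := hj1 i hii'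
          have := f.gap i i' hii'
          omega
        · rw [Function.update_of_ne hi, Function.update_of_ne hi']
          exact e.gap i i' hii'
    · intro i
      by_cases hi : i = j
      · subst hi; rw [Function.update_self]; exact hv1
      · rw [Function.update_of_ne hi]; exact e.lo i
    · intro i
      by_cases hi : i = j
      · subst hi; rw [Function.update_self]; exact hv2
      · rw [Function.update_of_ne hi]; exact e.hi i
  -- properties of an updated tuple
  have hU' : ∀ e' : ED n t k, ∀ v : ℕ, e'.x = Function.update e.x j v →
      e'.U = (Finset.univ.erase j).biUnion e.F ∪ Finset.Icc v (v + t - 1) := by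
    intro e' v hx
    ext c
    rw [Finset.mem_union, Finset.mem_biUnion, ED.U, Finset.mem_biUnion]
    simp only [ED.F, hx]
    constructor
    · rintro ⟨i, -, hc⟩
      by_cases hi : i = j
      · subst hi
        rw [Function.update_self] at hc
        exact Or.inr hc
      · rw [Function.update_of_ne hi] at hc
        exact Or.inl ⟨i, Finset.mem_erase.mpr ⟨hi, Finset.mem_univ i⟩, hc⟩
    · rintro (⟨i, hi, hc⟩ | hc)
      · refine ⟨i, Finset.mem_univ i, ?_⟩
        rw [Function.update_of_ne (Finset.ne_of_mem_erase hi)]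
        exact hc
      · refine ⟨j, Finset.mem_univ j, ?_⟩
        rw [Function.update_self]
        exact hc
  have hmu' : ∀ e' : ED n t k, ∀ v : ℕ, e'.x = Function.update e.x j v →
      f.x j ≤ v → v < e.x j → mu e' f < mu e f := by
    intro e' v hx hv1 hv2
    unfold mu
    rw [← Finset.sum_erase_add _ _ (Finset.mem_univ j),
      ← Finset.sum_erase_add _ _ (Finset.mem_univ j)]
    have hterms : ∑ i ∈ Finset.univ.erase j, ((e'.x i - f.x i) + (f.x i - e'.x i)) =
        ∑ i ∈ Finset.univ.erase j, ((e.x i - f.x i) + (f.x i - e.x i)) := by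
      refine Finset.sum_congr rfl (fun i hi => ?_)
      rw [hx, Function.update_of_ne (Finset.ne_of_mem_erase hi)]
    rw [hterms]
    have hvj : e'.x j = v := by rw [hx, Function.update_self]
    rw [hvj]
    have : (v - f.x j) + (f.x j - v) < (e.x j - f.x j) + (f.x j - e.x j) := by omega
    omega
  have hErase : ∀ i : Fin k, i ≠ j → e.F i ⊆ e.U := fun i _ => e.F_subset_U i
  by_cases hbad : e.U ∪ f.F j = Mstar
  · -- bad case: slide one step to the left
    -- cardinality analysis first
    have hdisj : ∀ i : Fin k, i ≠ j → f.F j ∩ e.F i = ∅ := by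
      intro i hij
      rcases lt_or_gt_of_ne hij with h | h
      · have hx : e.x i = f.x i := hj1 i h
        have hg := f.gap i j h
        rw [Finset.inter_comm]
        show Finset.Icc (e.x i) (e.x i + t - 1) ∩ Finset.Icc (f.x j) (f.x j + t - 1) = ∅
        exact ED.Icc_disj ht1 (by omega)
      · have hg := e.gap j i h
        show Finset.Icc (f.x j) (f.x j + t - 1) ∩ Finset.Icc (e.x i) (e.x i + t - 1) = ∅
        exact ED.Icc_disj ht1 (by omega)
    have hsd : f.F j \ e.U = f.F j \ e.F j := by
      ext c
      simp only [Finset.mem_sdiff, ED.U, Finset.mem_biUnion, Finset.mem_univ, true_and]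
      constructor
      · rintro ⟨h1, h2⟩
        exact ⟨h1, fun hc => h2 ⟨j, hc⟩⟩
      · rintro ⟨h1, h2⟩
        refine ⟨h1, ?_⟩
        rintro ⟨i, hci⟩
        by_cases hij : i = j
        · subst hij; exact h2 hci
        · have hmm : c ∈ f.F j ∩ e.F i := Finset.mem_inter.mpr ⟨h1, hci⟩
          rw [hdisj i hij] at hmm
          exact Finset.notMem_empty _ hmm
    have hMcard : Mstar.card = (f.F j \ e.F j).card + k * t := by
      rw [← hbad, Finset.union_comm, ← Finset.card_sdiff_add_card, hsd, e.card_U ht1]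
    have hcardFj : (f.F j).card = t := by
      show (Finset.Icc (f.x j) (f.x j + t - 1)).card = t
      rw [Nat.card_Icc]
      have := f.lo j
      omega
    have hsub1 : f.F j \ e.F j ⊆ Finset.Icc (f.x j) (e.x j - 1) := by
      intro c hc
      simp only [ED.F, Finset.mem_sdiff, Finset.mem_Icc, not_and, not_le] at hc
      rw [Finset.mem_Icc]
      omega
    have hcard1 : (f.F j \ e.F j).card ≤ e.x j - f.x j := by
      have := Finset.card_le_card hsub1
      rw [Nat.card_Icc] at this
      omega
    have hkt : (k + 1) * t = k * t + t := by ring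
    have hst : e.x j ≤ f.x j + t - 1 := by
      by_contra hcon
      push_neg at hcon
      have hdisjj : f.F j ∩ e.F j = ∅ := by
        show Finset.Icc (f.x j) (f.x j + t - 1) ∩ Finset.Icc (e.x j) (e.x j + t - 1) = ∅
        exact ED.Icc_disj ht1 (by omega)
      have : f.F j \ e.F j = f.F j := by
        rw [Finset.sdiff_eq_self_iff_disjoint]
        exact Finset.disjoint_iff_inter_eq_empty.mpr hdisjj
      rw [this, hcardFj] at hMcard
      omega
    have hs2 : f.x j + 2 ≤ e.x j := by
      by_contra hcon
      push_neg at hcon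
      omega
    -- the new tuple
    obtain ⟨e', hx'⟩ := build (e.x j - 1) (by have := f.lo j; omega)
      (by have := e.hi j; omega) (by omega) (by omega)
    have hU'e := hU' e' (e.x j - 1) hx'
    have he'sub : e'.U ⊆ Mstar := by
      rw [hU'e]
      apply Finset.union_subset
      · intro c hc
        obtain ⟨i, hi, hci⟩ := Finset.mem_biUnion.mp hc
        exact he (hErase i (Finset.ne_of_mem_erase hi) hci)
      · intro c hc
        rw [Finset.mem_Icc] at hc
        by_cases hcx : e.x j ≤ c
        · apply he
          apply e.F_subset_U j
          show c ∈ Finset.Icc (e.x j) (e.x j + t - 1)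
          rw [Finset.mem_Icc]
          omega
        · apply hFjsub
          show c ∈ Finset.Icc (f.x j) (f.x j + t - 1)
          rw [Finset.mem_Icc]
          omega
    refine ⟨e', he'sub, hmu' e' _ hx' (by omega) (by omega), ?_⟩
    apply step ht1 hk hD e e' he he'sub
    -- the union is small
    intro hcon
    have hsubW : e.U ∪ e'.U ⊆ insert (e.x j - 1) e.U := by
      apply Finset.union_subset
      · exact fun c hc => Finset.mem_insert_of_mem hc
      · rw [hU'e]
        apply Finset.union_subset
        · intro c hc
          obtain ⟨i, hi, hci⟩ := Finset.mem_biUnion.mp hc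
          exact Finset.mem_insert_of_mem (hErase i (Finset.ne_of_mem_erase hi) hci)
        · intro c hc
          rw [Finset.mem_Icc] at hc
          by_cases hcx : e.x j ≤ c
          · apply Finset.mem_insert_of_mem
            apply e.F_subset_U j
            show c ∈ Finset.Icc (e.x j) (e.x j + t - 1)
            rw [Finset.mem_Icc]
            omega
          · have : c = e.x j - 1 := by omega
            rw [this]
            exact Finset.mem_insert_self _ _
    have hcards : Mstar.card ≤ k * t + 1 := by
      rw [← hcon]
      calc (e.U ∪ e'.U).card ≤ (insert (e.x j - 1) e.U).card := Finset.card_le_card hsubW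
        _ ≤ e.U.card + 1 := Finset.card_insert_le _ _
        _ = k * t + 1 := by rw [e.card_U ht1]
    omega
  · -- good case: jump to f.x j
    obtain ⟨e', hx'⟩ := build (f.x j) (f.lo j) (f.hi j) (le_refl _) hj2
    have hU'e := hU' e' (f.x j) hx'
    have hFj : (Finset.Icc (f.x j) (f.x j + t - 1)) = f.F j := rfl
    have he'sub : e'.U ⊆ Mstar := by
      rw [hU'e, hFj]
      apply Finset.union_subset
      · intro c hc
        obtain ⟨i, hi, hci⟩ := Finset.mem_biUnion.mp hc
        exact he (hErase i (Finset.ne_of_mem_erase hi) hci)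
      · exact hFjsub
    refine ⟨e', he'sub, hmu' e' _ hx' (le_refl _) hj2, ?_⟩
    apply step ht1 hk hD e e' he he'sub
    intro hcon
    apply hbad
    rw [← hcon]
    have h1 : f.F j ⊆ e'.U := by
      rw [hU'e, hFj]
      exact Finset.subset_union_right
    have h2 : e'.U ⊆ e.U ∪ f.F j := by
      rw [hU'e, hFj]
      apply Finset.union_subset
      · intro c hc
        obtain ⟨i, hi, hci⟩ := Finset.mem_biUnion.mp hc
        exact Finset.mem_union_left _ (hErase i (Finset.ne_of_mem_erase hi) hci)
      · exact Finset.subset_union_right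
    apply Finset.Subset.antisymm
    · exact Finset.union_subset (Finset.subset_union_left)
        (h1.trans Finset.subset_union_right)
    · exact Finset.union_subset (Finset.subset_union_left) h2


lemma connect (ht : 2 ≤ t) (hk : 1 ≤ k) {Mstar : Finset ℕ}
    (hD : k * t + 1 < Mstar.card) (hD3 : Mstar.card ≠ (k + 1) * t) :
    ∀ N : ℕ, ∀ e f : ED n t k, e.U ⊆ Mstar → f.U ⊆ Mstar → mu e f < N →
      Relation.ReflTransGen (Rel K n t k (ind Mstar)) (ind e.U) (ind f.U) := by
  have ht1 : 1 ≤ t := by omega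
  intro N
  induction N with
  | zero => intro e f _ _ h; omega
  | succ N ih =>
    intro e f he hf hmuN
    by_cases hef : e.x = f.x
    · have : e.U = f.U := by
        unfold ED.U ED.F
        rw [hef]
      rw [this]
    · have hne : (Finset.univ.filter (fun i => e.x i ≠ f.x i)).Nonempty := by
        rw [Finset.filter_nonempty_iff]
        obtain ⟨i, hi⟩ := Function.ne_iff.mp hef
        exact ⟨i, Finset.mem_univ _, hi⟩
      set j := (Finset.univ.filter (fun i => e.x i ≠ f.x i)).min' hne with hj
      have hjmem := Finset.min'_mem _ hne
      rw [Finset.mem_filter] at hjmem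
      have hjne : e.x j ≠ f.x j := hjmem.2
      have hmin : ∀ i, i < j → e.x i = f.x i := by
        intro i hij
        by_contra hcon
        have : j ≤ i := Finset.min'_le (Finset.univ.filter (fun i => e.x i ≠ f.x i)) i
          (Finset.mem_filter.mpr ⟨Finset.mem_univ _, hcon⟩)
        exact absurd hij (not_lt.mpr this)
      rcases lt_or_gt_of_ne hjne with hlt | hgt
      · obtain ⟨f', hf's, hmu', hrtg⟩ := advance (K := K) ht hk hD hD3 f e hf he j
          (fun i h => (hmin i h).symm) hlt
        have hmu'' : mu e f' < N := by
          have h1 : mu f' e = mu e f' := mu_comm f' e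
          have h2 : mu f e = mu e f := mu_comm f e
          omega
        exact (ih e f' he hf's hmu'').trans (rtg_symm (fun _ _ h => rel_symm h) hrtg)
      · obtain ⟨e', he's, hmu', hrtg⟩ := advance (K := K) ht hk hD hD3 e f he hf j hmin hgt
        exact hrtg.trans (ih e' f he's hf (by omega))

end Stmt11Aux

/-- For `I = I_{n,t}^{[k]}` and `m` the lcm of two minimal
monomial generators of `I` with `kt + 1 < deg m ≤ 2kt` and `deg m ≠ (k+1)t`,
the comparability graph of the open interval `(1, m)` of the lcm lattice of `I`
is connected. -/
theorem comparability_graph_of_interval_connected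
    (K : Type) [Field K] (n t k : ℕ) (ht : 2 ≤ t) (htn : t ≤ n)
    (hk1 : 1 ≤ k) (hk2 : k ≤ (pathComplex n t).matchingNumber)
    (a b m : ℕ →₀ ℕ)
    (ha : IsMinGen (sqfreePower K (pathComplex n t) k) (monomial a (1 : K)))
    (hb : IsMinGen (sqfreePower K (pathComplex n t) k) (monomial b (1 : K)))
    (hm : m = a ⊔ b)
    (hd1 : k * t + 1 < degOf m) (hd2 : degOf m ≤ 2 * (k * t))
    (hd3 : degOf m ≠ (k + 1) * t) :
    ∀ u ∈ openInterval K (sqfreePower K (pathComplex n t) k) m,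
      ∀ v ∈ openInterval K (sqfreePower K (pathComplex n t) k) m,
        Relation.ReflTransGen
          (fun p q => p ∈ openInterval K (sqfreePower K (pathComplex n t) k) m ∧
            q ∈ openInterval K (sqfreePower K (pathComplex n t) k) m ∧
            p ≠ q ∧ (p ≤ q ∨ q ≤ p)) u v := by
  classical
  have ht1 : 1 ≤ t := by omega
  have hI : sqfreePower K (pathComplex n t) k = matchPow K (pathFacets n t) k := by
    unfold sqfreePower
    rw [Stmt11Aux.facets_pathComplex ht1 htn]
  rw [hI] at ha hb ⊢
  obtain ⟨Ma, hMa, haeq⟩ := Stmt11Aux.minGen_char ht1 ha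
  obtain ⟨Mb, hMb, hbeq⟩ := Stmt11Aux.minGen_char ht1 hb
  obtain ⟨ea, heaU⟩ := Stmt11Aux.toED ht1 hMa
  obtain ⟨eb, hebU⟩ := Stmt11Aux.toED ht1 hMb
  have ham : a = Stmt11Aux.ind ea.U := by rw [haeq, heaU]
  have hbm : b = Stmt11Aux.ind eb.U := by rw [hbeq, hebU]
  set Mstar : Finset ℕ := ea.U ∪ eb.U with hMstar
  have hmeq : m = Stmt11Aux.ind Mstar := by rw [hm, ham, hbm, Stmt11Aux.ind_sup]
  have hdeg : degOf m = Mstar.card := by rw [hmeq, Stmt11Aux.degOf_ind]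
  have hD : k * t + 1 < Mstar.card := by omega
  have hD3 : Mstar.card ≠ (k + 1) * t := by rw [← hdeg]; exact hd3
  rw [hmeq]
  intro u hu v hv
  have extract : ∀ w, w ∈ openInterval K (matchPow K (pathFacets n t) k)
        (Stmt11Aux.ind Mstar) →
      ∃ dw : Stmt11Aux.ED n t k, dw.U ⊆ Mstar ∧ Stmt11Aux.ind dw.U ≤ w ∧
        Relation.ReflTransGen (Stmt11Aux.Rel K n t k (Stmt11Aux.ind Mstar)) w
          (Stmt11Aux.ind dw.U) := by
    intro w hw
    have hw' := hw
    obtain ⟨⟨S, hSgen, hSup⟩, hw0, hwm, hwle⟩ := hw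
    have hSne : S.Nonempty := by
      rw [Finset.nonempty_iff_ne_empty]
      rintro rfl
      rw [Finset.sup_empty] at hSup
      apply hw0
      rw [hSup]
      rfl
    obtain ⟨g, hgS⟩ := hSne
    obtain ⟨Mg, hMg, hgeq⟩ := Stmt11Aux.minGen_char ht1 (hSgen g hgS)
    obtain ⟨dg, hdgU⟩ := Stmt11Aux.toED ht1 hMg
    have hgU : g = Stmt11Aux.ind dg.U := by rw [hgeq, hdgU]
    have hgw : Stmt11Aux.ind dg.U ≤ w := by
      rw [← hgU, hSup]
      exact Finset.le_sup (f := id) hgS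
    have hsubg : dg.U ⊆ Mstar := Stmt11Aux.ind_le_iff.mp (hgw.trans hwle)
    refine ⟨dg, hsubg, hgw, ?_⟩
    by_cases hweq : w = Stmt11Aux.ind dg.U
    · rw [hweq]
    · refine Relation.ReflTransGen.single ?_
      exact ⟨hw', Stmt11Aux.gen_in_interval ht1 hk1 hD dg hsubg, hweq, Or.inr hgw⟩
  obtain ⟨du, hdu1, hdu2, hdu3⟩ := extract u hu
  obtain ⟨dv, hdv1, hdv2, hdv3⟩ := extract v hv
  have hmid := Stmt11Aux.connect (K := K) ht hk1 hD hD3 (Stmt11Aux.mu du dv + 1) du dv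
    hdu1 hdv1 (by omega)
  exact (hdu3.trans hmid).trans
    (Stmt11Aux.rtg_symm (fun _ _ h => Stmt11Aux.rel_symm h) hdv3)

end
end

section
/- Let Δ be a simplicial forest, let F be a good leaf of Δ, and set f = ∏_{v ∈ F} x_v. Then for every 1 ≤ k ≤ ν(Δ), the colon ideal I(Δ)^{[k+1]} : (f) equals I(Δ∖F)^{[k]} (where a squarefree power is the zero ideal when the exponent exceeds the relevant matching number). -/
noncomputable section

open Finset MvPolynomial

/-! ### Auxiliary material for the proof -/

/-- The exponent vector of the squarefree monomial `x_H`. -/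
def wvec {V : Type} [DecidableEq V] (H : Finset V) : V →₀ ℕ :=
  ∑ v ∈ H, Finsupp.single v 1

/-- The exponent vector of the monomial `∏_{H ∈ M} x_H`. -/
def mvec {V : Type} [DecidableEq V] (M : Finset (Finset V)) : V →₀ ℕ :=
  ∑ H ∈ M, wvec H

lemma wvec_apply {V : Type} [DecidableEq V] (H : Finset V) (v : V) :
    wvec H v = if v ∈ H then 1 else 0 := by
  classical
  rw [wvec, Finsupp.finset_sum_apply]
  simp [Finsupp.single_apply]

lemma mvec_apply {V : Type} [DecidableEq V] (M : Finset (Finset V)) (v : V) :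
    mvec M v = ∑ H ∈ M, wvec H v := by
  rw [mvec, Finsupp.finset_sum_apply]

lemma prod_X_eq {K : Type} [Field K] {V : Type} [DecidableEq V] (H : Finset V) :
    ∏ v ∈ H, (X v : MvPolynomial V K) = monomial (wvec H) 1 := by
  classical
  induction H using Finset.cons_induction with
  | empty => simp [wvec]
  | cons a s ha ih =>
      have hw : wvec (Finset.cons a s ha) = Finsupp.single a 1 + wvec s := by
        rw [wvec, Finset.sum_cons]; rfl
      have hx : (X a : MvPolynomial V K) = monomial (Finsupp.single a 1) 1 := rfl
      rw [Finset.prod_cons, ih, hx, monomial_mul, one_mul, hw]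

lemma prod_prod_X_eq {K : Type} [Field K] {V : Type} [DecidableEq V]
    (M : Finset (Finset V)) :
    ∏ H ∈ M, ∏ v ∈ H, (X v : MvPolynomial V K) = monomial (mvec M) 1 := by
  classical
  induction M using Finset.cons_induction with
  | empty => simp [mvec]
  | cons A N hA ih =>
      have hw : mvec (Finset.cons A N hA) = wvec A + mvec N := by
        rw [mvec, Finset.sum_cons]; rfl
      rw [Finset.prod_cons, ih, prod_X_eq, monomial_mul, one_mul, hw]

/-- `matchPow` as a span of a monomial image, suitable for
`MvPolynomial.mem_ideal_span_monomial_image`. -/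
lemma matchPow_eq_span (K : Type) [Field K] {V : Type} [DecidableEq V]
    (ℱ : Finset (Finset V)) (k : ℕ) :
    matchPow K ℱ k = Ideal.span ((fun d => monomial d (1 : K)) ''
      {d : V →₀ ℕ | ∃ M : Finset (Finset V), M ⊆ ℱ ∧
        (∀ F ∈ M, ∀ G ∈ M, F ≠ G → F ∩ G = ∅) ∧ M.card = k ∧ d = mvec M}) := by
  unfold matchPow
  congr 1
  ext p
  constructor
  · rintro ⟨M, h1, h2, h3, rfl⟩
    exact ⟨mvec M, ⟨M, h1, h2, h3, rfl⟩, (prod_prod_X_eq M).symm⟩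
  · rintro ⟨d, ⟨M, h1, h2, h3, rfl⟩, rfl⟩
    exact ⟨M, h1, h2, h3, (prod_prod_X_eq M).symm⟩

/-- The key combinatorial lemma: from a `(k+1)`-matching whose exponent vector is
dominated by `e + wvec F`, a good leaf `F` lets us extract a `k`-matching in
`Δ ∖ F` whose exponent vector is dominated by `e`. -/
lemma key_matching {V : Type} [DecidableEq V] (Δ : SimplicialComplex V)
    (F : Finset V) (hF : Δ.IsGoodLeaf F) (k : ℕ)
    (N : Finset (Finset V)) (hN : N ⊆ Δ.facets)
    (hpd : ∀ A ∈ N, ∀ B ∈ N, A ≠ B → A ∩ B = ∅)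
    (hcard : N.card = k + 1) (e : V →₀ ℕ) (hle : mvec N ≤ e + wvec F) :
    ∃ M : Finset (Finset V),
      M ⊆ (Δ.facets.filter fun G => F ∩ G = ∅) ∧
      (∀ A ∈ M, ∀ B ∈ M, A ≠ B → A ∩ B = ∅) ∧ M.card = k ∧ mvec M ≤ e := by
  classical
  have hGex : ∃ G0 ∈ N, ∀ H ∈ N, H ≠ G0 → F ∩ H = ∅ := by
    by_cases hFN : F ∈ N
    · exact ⟨F, hFN, fun H hH hne => hpd F hFN H hH (Ne.symm hne)⟩
    · have hSsub : insert F N ⊆ Δ.facets :=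
        Finset.insert_subset hF.1 hN
      obtain ⟨-, hor⟩ := hF.2 (insert F N) hSsub (Finset.mem_insert_self _ _)
      rcases hor with h1 | ⟨G, hGS, hGne, hall⟩
      · exfalso
        have hNne : N.Nonempty := Finset.card_pos.mp (by omega)
        obtain ⟨H, hH⟩ := hNne
        have : H ∈ ({F} : Finset (Finset V)) := h1 ▸ Finset.mem_insert_of_mem hH
        exact hFN ((Finset.mem_singleton.mp this) ▸ hH)
      · have hGN : G ∈ N := (Finset.mem_insert.mp hGS).resolve_left hGne
        refine ⟨G, hGN, fun H hH hne => ?_⟩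
        have hHF : H ≠ F := fun h => hFN (h ▸ hH)
        have h1 : H ∩ F ⊆ G ∩ F := hall H (Finset.mem_insert_of_mem hH) hHF
        have h2 : H ∩ F ⊆ H ∩ G :=
          Finset.subset_inter Finset.inter_subset_left
            (h1.trans Finset.inter_subset_left)
        have h3 : H ∩ G = ∅ := hpd H hH G hGN hne
        rw [Finset.inter_comm]
        exact Finset.subset_empty.mp (h3 ▸ h2)
  obtain ⟨G0, hG0, hdisj⟩ := hGex
  refine ⟨N.erase G0, ?_, ?_, ?_, ?_⟩
  · intro H hH
    obtain ⟨hne, hHN⟩ := Finset.mem_erase.mp hH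
    exact Finset.mem_filter.mpr ⟨hN hHN, hdisj H hHN hne⟩
  · intro A hA B hB hne
    exact hpd A (Finset.mem_of_mem_erase hA) B (Finset.mem_of_mem_erase hB) hne
  · rw [Finset.card_erase_of_mem hG0, hcard]
    omega
  · rw [Finsupp.le_def]
    intro v
    by_cases hv : ∃ H ∈ N.erase G0, v ∈ H
    · obtain ⟨H, hH, hvH⟩ := hv
      obtain ⟨hne, hHN⟩ := Finset.mem_erase.mp hH
      have hvF : v ∉ F := by
        intro hvF
        have h0 : F ∩ H = ∅ := hdisj H hHN hne
        exact (Finset.eq_empty_iff_forall_notMem.mp h0 v)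
          (Finset.mem_inter.mpr ⟨hvF, hvH⟩)
      have h1 : mvec (N.erase G0) v ≤ mvec N v := by
        rw [mvec_apply, mvec_apply]
        exact Finset.sum_le_sum_of_subset (Finset.erase_subset _ _)
      have h2 : mvec N v ≤ e v + wvec F v := hle v
      have h3 : wvec F v = 0 := by rw [wvec_apply]; simp [hvF]
      omega
    · push_neg at hv
      have h0 : mvec (N.erase G0) v = 0 := by
        rw [mvec_apply]
        refine Finset.sum_eq_zero fun H hH => ?_
        rw [wvec_apply]
        simp [hv H hH]
      simp [h0]

/-- For a good leaf `F` of a simplicial forest `Δ` with facet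
monomial `f`, one has `I(Δ)^{[k+1]} : (f) = I(Δ∖F)^{[k]}` for `1 ≤ k ≤ ν(Δ)`,
where `Δ∖F` is the subcomplex on the facets of `Δ` disjoint from `F`. -/
theorem colon_sqfreePower_goodLeaf
    (K : Type) [Field K] {V : Type} [DecidableEq V]
    (Δ : SimplicialComplex V) (hΔ : Δ.IsForest)
    (F : Finset V) (hF : Δ.IsGoodLeaf F) (hFne : F.Nonempty)
    (k : ℕ) (hk1 : 1 ≤ k) (hk2 : k ≤ Δ.matchingNumber) :
    Submodule.colon (sqfreePower K Δ (k + 1))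
        (Ideal.span {∏ v ∈ F, (X v : MvPolynomial V K)}) =
      matchPow K (Δ.facets.filter fun G => F ∩ G = ∅) k := by
  classical
  have hf : (∏ v ∈ F, (X v : MvPolynomial V K)) = monomial (wvec F) 1 := prod_X_eq F
  apply le_antisymm
  · intro p hp
    rw [Ideal.mem_colon_span_singleton, hf] at hp
    rw [sqfreePower, matchPow_eq_span, mem_ideal_span_monomial_image] at hp
    rw [matchPow_eq_span, mem_ideal_span_monomial_image]
    intro e he
    have hsupp : e + wvec F ∈ (p * monomial (wvec F) (1 : K)).support := by
      rw [mem_support_iff, coeff_mul_monomial, mul_one]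
      exact mem_support_iff.mp he
    obtain ⟨d, ⟨N, hN1, hN2, hN3, rfl⟩, hdle⟩ := hp _ hsupp
    obtain ⟨M, hM1, hM2, hM3, hMle⟩ :=
      key_matching Δ F hF k N hN1 hN2 hN3 e hdle
    exact ⟨mvec M, ⟨M, hM1, hM2, hM3, rfl⟩, hMle⟩
  · rw [matchPow_eq_span, Ideal.span_le]
    rintro q ⟨d, ⟨M, hM1, hM2, hM3, rfl⟩, rfl⟩
    rw [SetLike.mem_coe, Ideal.mem_colon_span_singleton, hf, monomial_mul, mul_one]
    have hFM : F ∉ M := by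
      intro h
      have h2 := (Finset.mem_filter.mp (hM1 h)).2
      rw [Finset.inter_self] at h2
      exact hFne.ne_empty h2
    have hins : mvec (insert F M) = mvec M + wvec F := by
      rw [mvec, Finset.sum_insert hFM, add_comm]
      rfl
    rw [sqfreePower, matchPow_eq_span]
    apply Ideal.subset_span
    refine ⟨mvec (insert F M), ⟨insert F M, ?_, ?_, ?_, rfl⟩, by rw [hins]⟩
    · exact Finset.insert_subset hF.1 (hM1.trans (Finset.filter_subset _ _))
    · intro A hA B hB hne
      rcases Finset.mem_insert.mp hA with rfl | hAM
      · rcases Finset.mem_insert.mp hB with rfl | hBM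
        · exact absurd rfl hne
        · exact (Finset.mem_filter.mp (hM1 hBM)).2
      · rcases Finset.mem_insert.mp hB with rfl | hBM
        · rw [Finset.inter_comm]
          exact (Finset.mem_filter.mp (hM1 hAM)).2
        · exact hM2 A hAM B hBM hne
    · rw [Finset.card_insert_of_notMem hFM, hM3]


end
end

section
/- Let K be a field, 2 ≤ t ≤ n, and f_j = x_j x_{j+1} ⋯ x_{j+t−1} ∈ K[x₁, …, x_n] for 1 ≤ j ≤ n − t + 1. Then for every 2 ≤ i ≤ n − t + 1, the colon ideal (f₁, …, f_{i−1}) : (f_i) equals (f₁, …, f_{i−t−1}) + (x_{i−1}), where (f₁, …, f_{i−t−1}) is understood to be the zero ideal when i ≤ t + 1. -/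
noncomputable section

open Finset MvPolynomial

section ColonAux

/-- Exponent vector of `f_j = x_j ⋯ x_{j+t-1}`. -/
def expo (t j : ℕ) : ℕ →₀ ℕ := ∑ m ∈ Finset.Icc j (j + t - 1), Finsupp.single m 1

lemma expo_apply (t j m : ℕ) :
    expo t j m = if m ∈ Finset.Icc j (j + t - 1) then 1 else 0 := by
  classical
  simp [expo, Finsupp.finset_sum_apply, Finsupp.single_apply]

lemma expo_le_iff {t j : ℕ} {d : ℕ →₀ ℕ} :
    expo t j ≤ d ↔ ∀ m, j ≤ m → m ≤ j + t - 1 → 1 ≤ d m := by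
  rw [Finsupp.le_def]
  constructor
  · intro h m h1 h2
    have := h m
    rwa [expo_apply, if_pos (Finset.mem_Icc.mpr ⟨h1, h2⟩)] at this
  · intro h m
    rw [expo_apply]
    split_ifs with hm
    · exact h m (Finset.mem_Icc.mp hm).1 (Finset.mem_Icc.mp hm).2
    · exact Nat.zero_le _

lemma prod_X_eq_monomial {K : Type} [Field K] (t j : ℕ) :
    ∏ m ∈ Finset.Icc j (j + t - 1), (X m : MvPolynomial ℕ K) =
      monomial (expo t j) 1 := by
  rw [expo]
  induction (Finset.Icc j (j + t - 1)) using Finset.cons_induction with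
  | empty => simp
  | cons a s ha ih =>
      rw [Finset.prod_cons, Finset.sum_cons, ih, X, monomial_mul, one_mul]

lemma mem_support_mul_monomial {K : Type} [Field K] {p : MvPolynomial ℕ K}
    {e d : ℕ →₀ ℕ} :
    d ∈ (p * monomial e 1).support ↔ ∃ c ∈ p.support, c + e = d := by
  rw [mem_support_iff, coeff_mul_monomial']
  split_ifs with h
  · simp only [mul_one]
    constructor
    · intro hne
      exact ⟨d - e, mem_support_iff.mpr hne, tsub_add_cancel_of_le h⟩
    · rintro ⟨c, hc, rfl⟩
      simpa [add_tsub_cancel_right] using mem_support_iff.mp hc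
  · constructor
    · intro h'; exact absurd rfl h'
    · rintro ⟨c, hc, rfl⟩
      exact absurd le_add_self h

lemma colon_key {t i : ℕ} (ht : 2 ≤ t) (hi2 : 2 ≤ i) (c : ℕ →₀ ℕ) :
    (∃ j ∈ Set.Icc 1 (i - 1), expo t j ≤ c + expo t i) ↔
      ((∃ j ∈ Set.Icc 1 (i - t - 1), expo t j ≤ c) ∨
        Finsupp.single (i - 1) 1 ≤ c) := by
  constructor
  · rintro ⟨j, ⟨hj1, hji⟩, hle⟩
    rw [expo_le_iff] at hle
    by_cases hcase : j + t ≤ i - 1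
    · left
      refine ⟨j, ⟨hj1, by omega⟩, expo_le_iff.mpr fun m h1 h2 => ?_⟩
      have := hle m h1 h2
      rw [Finsupp.add_apply, expo_apply] at this
      rw [if_neg (by rw [Finset.mem_Icc]; omega)] at this
      omega
    · right
      rw [Finsupp.single_le_iff]
      have := hle (i - 1) (by omega) (by omega)
      rw [Finsupp.add_apply, expo_apply] at this
      rw [if_neg (by rw [Finset.mem_Icc]; omega)] at this
      omega
  · rintro (⟨j, ⟨hj1, hji⟩, hle⟩ | hsingle)
    · exact ⟨j, ⟨hj1, by omega⟩, hle.trans le_self_add⟩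
    · rw [Finsupp.single_le_iff] at hsingle
      refine ⟨i - 1, ⟨by omega, le_rfl⟩, expo_le_iff.mpr fun m h1 h2 => ?_⟩
      rw [Finsupp.add_apply, expo_apply]
      by_cases hm : m = i - 1
      · subst hm; omega
      · rw [if_pos (by rw [Finset.mem_Icc]; omega)]
        omega

end ColonAux

/-- For `f_j = x_j x_{j+1} ⋯ x_{j+t-1}` and `2 ≤ i ≤ n-t+1`,
the colon ideal `(f₁, …, f_{i-1}) : (f_i)` equals
`(f₁, …, f_{i-t-1}) + (x_{i-1})` (the first summand being zero if `i ≤ t+1`). -/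
theorem colon_pathIdeal_generators
    (K : Type) [Field K] (n t i : ℕ) (ht : 2 ≤ t) (htn : t ≤ n)
    (hi2 : 2 ≤ i) (hin : i ≤ n - t + 1) :
    Submodule.colon
        (Ideal.span ((fun j => ∏ m ∈ Finset.Icc j (j + t - 1), (X m : MvPolynomial ℕ K)) ''
          Set.Icc 1 (i - 1)))
        (Ideal.span {∏ m ∈ Finset.Icc i (i + t - 1), (X m : MvPolynomial ℕ K)}) =
      Ideal.span
        ((fun j => ∏ m ∈ Finset.Icc j (j + t - 1), (X m : MvPolynomial ℕ K)) ''
            Set.Icc 1 (i - t - 1) ∪ {X (i - 1)}) := by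
  have himg : ∀ S : Set ℕ,
      ((fun j => ∏ m ∈ Finset.Icc j (j + t - 1), (X m : MvPolynomial ℕ K)) '' S) =
        (fun s => monomial s (1 : K)) '' (expo t '' S) := by
    intro S
    rw [Set.image_image]
    exact Set.image_congr fun j _ => prod_X_eq_monomial t j
  ext p
  rw [Ideal.mem_colon_span_singleton, prod_X_eq_monomial, himg,
    show ((fun j => ∏ m ∈ Finset.Icc j (j + t - 1), (X m : MvPolynomial ℕ K)) ''
          Set.Icc 1 (i - t - 1) ∪ {X (i - 1)}) =
      (fun s => monomial s (1 : K)) ''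
        (expo t '' Set.Icc 1 (i - t - 1) ∪ {Finsupp.single (i - 1) 1}) by
      rw [Set.image_union, himg, Set.image_singleton]; rfl,
    mem_ideal_span_monomial_image, mem_ideal_span_monomial_image]
  constructor
  · intro h c hc
    obtain ⟨si, ⟨j, hj, rfl⟩, hle⟩ :=
      h (c + expo t i) (mem_support_mul_monomial.mpr ⟨c, hc, rfl⟩)
    rcases (colon_key ht hi2 c).mp ⟨j, hj, hle⟩ with ⟨j', hj', hle'⟩ | hs
    · exact ⟨expo t j', Or.inl ⟨j', hj', rfl⟩, hle'⟩
    · exact ⟨Finsupp.single (i - 1) 1, Or.inr rfl, hs⟩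
  · intro h d hd
    obtain ⟨c, hc, rfl⟩ := mem_support_mul_monomial.mp hd
    have hkey : (∃ j ∈ Set.Icc 1 (i - t - 1), expo t j ≤ c) ∨
        Finsupp.single (i - 1) 1 ≤ c := by
      obtain ⟨si, hsi, hle⟩ := h c hc
      rcases hsi with ⟨j, hj, rfl⟩ | hs
      · exact Or.inl ⟨j, hj, hle⟩
      · rw [Set.mem_singleton_iff] at hs
        subst hs
        exact Or.inr hle
    obtain ⟨j, hj, hle⟩ := (colon_key ht hi2 c).mpr hkey
    exact ⟨expo t j, ⟨j, hj, rfl⟩, hle⟩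

end
end

section
/- For all integers t ≥ 2 and n ≥ t + 1, the restricted matching number of the t-path simplicial tree of the path graph P_n satisfies ν₀(Γ_{n,t}) = ⌊(n − 1)/t⌋. -/
noncomputable section

open Finset MvPolynomial

namespace PathAux

variable {n t : ℕ}

lemma card_interval (ht : 1 ≤ t) (i : ℕ) : (Finset.Icc i (i + t - 1)).card = t := by
  rw [Nat.card_Icc]; omega

lemma start_eq_of_subset (ht : 1 ≤ t) {i j : ℕ}
    (h : Finset.Icc i (i + t - 1) ⊆ Finset.Icc j (j + t - 1)) : i = j := by
  have h1 : i ∈ Finset.Icc j (j + t - 1) := h (by rw [Finset.mem_Icc]; omega)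
  have heq : Finset.Icc i (i + t - 1) = Finset.Icc j (j + t - 1) :=
    Finset.eq_of_subset_of_card_le h (by rw [card_interval ht, card_interval ht])
  have h2 : j ∈ Finset.Icc i (i + t - 1) := by rw [heq, Finset.mem_Icc]; omega
  rw [Finset.mem_Icc] at h1 h2
  omega

lemma faces_path :
    (pathComplex n t).faces = insert ∅ ((pathFacets n t).biUnion Finset.powerset) := rfl

lemma mem_facets_path (ht : 1 ≤ t) {F : Finset ℕ} :
    F ∈ (pathComplex n t).facets ↔ F ∈ pathFacets n t := by
  simp only [SimplicialComplex.facets, Finset.mem_filter]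
  constructor
  · rintro ⟨hF, hmax⟩
    rw [faces_path, Finset.mem_insert] at hF
    rcases hF with rfl | hF
    · exfalso
      have hA : Finset.Icc 1 (1 + t - 1) ∈ pathFacets n t := by
        rw [pathFacets, Finset.mem_image]
        exact ⟨1, by rw [Finset.mem_Icc]; omega, rfl⟩
      have hAf : Finset.Icc 1 (1 + t - 1) ∈ (pathComplex n t).faces := by
        rw [faces_path, Finset.mem_insert]
        exact Or.inr (Finset.mem_biUnion.mpr ⟨_, hA, Finset.mem_powerset.mpr (subset_refl _)⟩)
      have hemp := hmax _ hAf (Finset.empty_subset _)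
      have h1 : (1 : ℕ) ∈ Finset.Icc 1 (1 + t - 1) := by rw [Finset.mem_Icc]; omega
      rw [← hemp] at h1
      exact absurd h1 (Finset.notMem_empty 1)
    · rcases Finset.mem_biUnion.mp hF with ⟨A, hA, hFA⟩
      rw [Finset.mem_powerset] at hFA
      have hAf : A ∈ (pathComplex n t).faces := by
        rw [faces_path, Finset.mem_insert]
        exact Or.inr (Finset.mem_biUnion.mpr ⟨_, hA, Finset.mem_powerset.mpr (subset_refl _)⟩)
      rw [hmax A hAf hFA]; exact hA
  · intro hF
    rcases Finset.mem_image.mp hF with ⟨i, hi, rfl⟩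
    refine ⟨?_, ?_⟩
    · rw [faces_path, Finset.mem_insert]
      exact Or.inr (Finset.mem_biUnion.mpr ⟨_, hF, Finset.mem_powerset.mpr (subset_refl _)⟩)
    · intro G hG hFG
      rw [faces_path, Finset.mem_insert] at hG
      rcases hG with rfl | hG
      · exact absurd (hFG (by rw [Finset.mem_Icc]; omega : i ∈ Finset.Icc i (i + t - 1)))
          (Finset.notMem_empty i)
      · rcases Finset.mem_biUnion.mp hG with ⟨B, hB, hGB⟩
        rw [Finset.mem_powerset] at hGB
        rcases Finset.mem_image.mp hB with ⟨j, hj, rfl⟩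
        have hij := start_eq_of_subset ht (hFG.trans hGB)
        subst hij
        exact Finset.Subset.antisymm hFG hGB

lemma inter_empty_iff (ht : 1 ≤ t) (i j : ℕ) :
    Finset.Icc i (i + t - 1) ∩ Finset.Icc j (j + t - 1) = ∅ ↔ (i + t ≤ j ∨ j + t ≤ i) := by
  constructor
  · intro h
    by_contra hc
    push_neg at hc
    rcases le_total i j with h' | h'
    · have hmem : j ∈ Finset.Icc i (i + t - 1) ∩ Finset.Icc j (j + t - 1) := by
        rw [Finset.mem_inter, Finset.mem_Icc, Finset.mem_Icc]; omega
      rw [h] at hmem; exact absurd hmem (Finset.notMem_empty _)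
    · have hmem : i ∈ Finset.Icc i (i + t - 1) ∩ Finset.Icc j (j + t - 1) := by
        rw [Finset.mem_inter, Finset.mem_Icc, Finset.mem_Icc]; omega
      rw [h] at hmem; exact absurd hmem (Finset.notMem_empty _)
  · intro h
    rw [Finset.eq_empty_iff_forall_notMem]
    intro v hv
    rw [Finset.mem_inter, Finset.mem_Icc, Finset.mem_Icc] at hv
    omega

lemma formGap_of (ht : 2 ≤ t) {i j : ℕ} (hi : i ∈ Finset.Icc 1 (n - t + 1))
    (hj : j ∈ Finset.Icc 1 (n - t + 1)) (h : i + t + 1 ≤ j) :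
    (pathComplex n t).FormGap (Finset.Icc i (i + t - 1)) (Finset.Icc j (j + t - 1)) := by
  have ht1 : 1 ≤ t := by omega
  have hmemF : Finset.Icc i (i + t - 1) ∈ (pathComplex n t).facets :=
    (mem_facets_path ht1).mpr (Finset.mem_image.mpr ⟨i, hi, rfl⟩)
  have hmemG : Finset.Icc j (j + t - 1) ∈ (pathComplex n t).facets :=
    (mem_facets_path ht1).mpr (Finset.mem_image.mpr ⟨j, hj, rfl⟩)
  refine ⟨hmemF, hmemG, (inter_empty_iff ht1 i j).mpr (Or.inl (by omega)), ?_⟩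
  intro H hH hsub
  rcases Finset.mem_image.mp ((mem_facets_path ht1).mp hH) with ⟨l, hl, rfl⟩
  rw [Finset.mem_Icc] at hi hj hl
  have hhole : i + t ∉ Finset.Icc i (i + t - 1) ∪ Finset.Icc j (j + t - 1) := by
    rw [Finset.mem_union, Finset.mem_Icc, Finset.mem_Icc]; omega
  have hcase : l ≤ i ∨ i + t + 1 ≤ l := by
    by_contra hc
    push_neg at hc
    exact hhole (hsub (by rw [Finset.mem_Icc]; omega))
  rcases hcase with hc | hc
  · left
    have hm := hsub (show l ∈ Finset.Icc l (l + t - 1) by rw [Finset.mem_Icc]; omega)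
    rw [Finset.mem_union, Finset.mem_Icc, Finset.mem_Icc] at hm
    have : l = i := by omega
    rw [this]
  · right
    have h1 := hsub (show l ∈ Finset.Icc l (l + t - 1) by rw [Finset.mem_Icc]; omega)
    have h2 := hsub (show l + t - 1 ∈ Finset.Icc l (l + t - 1) by rw [Finset.mem_Icc]; omega)
    rw [Finset.mem_union, Finset.mem_Icc, Finset.mem_Icc] at h1 h2
    have : l = j := by omega
    rw [this]

lemma adj_absurd (ht : 2 ≤ t) {i j : ℕ} (hi1 : 1 ≤ i) (hj : j ≤ n - t + 1) (hij : j = i + t)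
    (hmax : ∀ H ∈ (pathComplex n t).facets,
      H ⊆ Finset.Icc i (i + t - 1) ∪ Finset.Icc j (j + t - 1) →
      H = Finset.Icc i (i + t - 1) ∨ H = Finset.Icc j (j + t - 1)) : False := by
  subst hij
  have ht1 : 1 ≤ t := by omega
  have hH : Finset.Icc (i + 1) (i + 1 + t - 1) ∈ (pathComplex n t).facets :=
    (mem_facets_path ht1).mpr
      (Finset.mem_image.mpr ⟨i + 1, by rw [Finset.mem_Icc]; omega, rfl⟩)
  have hsub : Finset.Icc (i + 1) (i + 1 + t - 1) ⊆
      Finset.Icc i (i + t - 1) ∪ Finset.Icc (i + t) (i + t + t - 1) := by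
    intro v hv
    rw [Finset.mem_Icc] at hv
    rw [Finset.mem_union, Finset.mem_Icc, Finset.mem_Icc]
    omega
  rcases hmax _ hH hsub with h | h
  · have hx : i ∈ Finset.Icc i (i + t - 1) := by rw [Finset.mem_Icc]; omega
    rw [← h, Finset.mem_Icc] at hx
    omega
  · have hx : i + 1 ∈ Finset.Icc (i + 1) (i + 1 + t - 1) := by rw [Finset.mem_Icc]; omega
    rw [h, Finset.mem_Icc] at hx
    omega

lemma formGap_start (ht : 2 ≤ t) {i j : ℕ} (hi : i ∈ Finset.Icc 1 (n - t + 1))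
    (hj : j ∈ Finset.Icc 1 (n - t + 1)) (hne : i ≠ j)
    (hg : (pathComplex n t).FormGap (Finset.Icc i (i + t - 1)) (Finset.Icc j (j + t - 1))) :
    i + t + 1 ≤ j ∨ j + t + 1 ≤ i := by
  obtain ⟨_, _, hdis, hmax⟩ := hg
  rw [Finset.mem_Icc] at hi hj
  have hd := (inter_empty_iff (by omega : 1 ≤ t) i j).mp hdis
  by_contra hc
  push_neg at hc
  rcases hd with hd | hd
  · have hij : j = i + t := by omega
    exact adj_absurd (n := n) ht (by omega) (by omega) hij hmax
  · have hij : i = j + t := by omega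
    refine adj_absurd (n := n) ht (by omega) (by omega) hij ?_
    intro H hH hs
    rw [Finset.union_comm] at hs
    exact (hmax H hH hs).symm

lemma lemA (t : ℕ) (ht : 1 ≤ t) :
    ∀ S : Finset ℕ, ∀ N : ℕ, S ⊆ Finset.Icc 1 N →
      (∀ i ∈ S, ∀ j ∈ S, i ≠ j → i + t ≤ j ∨ j + t ≤ i) →
      S.card * t + 1 ≤ N + t := by
  intro S
  induction S using Finset.strongInduction with
  | _ S ih =>
    intro N hSN hpair
    rcases S.eq_empty_or_nonempty with rfl | hS
    · simp; omega
    have hM : S.max' hS ∈ S := S.max'_mem hS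
    set M := S.max' hS with hMdef
    have hMN : 1 ≤ M ∧ M ≤ N := by
      have := hSN hM; rw [Finset.mem_Icc] at this; exact this
    have hkey : ∀ i ∈ S.erase M, i + t ≤ M := by
      intro i hi
      have hiS := Finset.mem_of_mem_erase hi
      have hile : i ≤ M := S.le_max' i hiS
      rcases hpair i hiS M hM (Finset.ne_of_mem_erase hi) with h | h
      · exact h
      · omega
    have hsub : S.erase M ⊆ Finset.Icc 1 (M - t) := by
      intro i hi
      have h1 := hSN (Finset.mem_of_mem_erase hi)
      rw [Finset.mem_Icc] at h1 ⊢
      have := hkey i hi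
      omega
    have hrec := ih (S.erase M) (Finset.erase_ssubset hM) (M - t) hsub
      (fun i hi j hj hij =>
        hpair i (Finset.mem_of_mem_erase hi) j (Finset.mem_of_mem_erase hj) hij)
    have hcard : (S.erase M).card = S.card - 1 := Finset.card_erase_of_mem hM
    rcases (S.erase M).eq_empty_or_nonempty with he | he
    · have hone : S.card = 1 := by
        have hpos : 0 < S.card := Finset.card_pos.mpr hS
        rw [he] at hcard
        simp at hcard
        omega
      rw [hone]
      omega
    · obtain ⟨i, hi⟩ := he
      have h1 := hSN (Finset.mem_of_mem_erase hi)
      rw [Finset.mem_Icc] at h1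
      have h2 := hkey i hi
      rw [hcard] at hrec
      have hsm : (S.card - 1) * t = S.card * t - t := Nat.sub_one_mul _ _
      have htt : 1 * t ≤ S.card * t :=
        Nat.mul_le_mul_right t (Finset.card_pos.mpr hS)
      omega

lemma lemB (t : ℕ) (ht : 1 ≤ t) :
    ∀ S : Finset ℕ, ∀ N : ℕ, S ⊆ Finset.Icc 1 N →
      (∀ i ∈ S, ∀ j ∈ S, i ≠ j → i + t ≤ j ∨ j + t ≤ i) →
      ∀ i0 ∈ S, (∀ j ∈ S, j ≠ i0 → i0 + t + 1 ≤ j ∨ j + t + 1 ≤ i0) →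
      2 ≤ S.card → S.card * t + 2 ≤ N + t := by
  intro S
  induction S using Finset.strongInduction with
  | _ S ih =>
    intro N hSN hpair i0 hi0 hspec hcard2
    have hS : S.Nonempty := Finset.card_pos.mp (by omega)
    have hM : S.max' hS ∈ S := S.max'_mem hS
    set M := S.max' hS with hMdef
    have hMN : 1 ≤ M ∧ M ≤ N := by
      have := hSN hM; rw [Finset.mem_Icc] at this; exact this
    by_cases hi0M : i0 = M
    · have hsub : S.erase i0 ⊆ Finset.Icc 1 (M - t - 1) := by
        intro i hi
        have hiS := Finset.mem_of_mem_erase hi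
        have h1 := hSN hiS; rw [Finset.mem_Icc] at h1 ⊢
        have hle : i ≤ M := S.le_max' i hiS
        rcases hspec i hiS (Finset.ne_of_mem_erase hi) with h | h <;> omega
      have hA := lemA t ht (S.erase i0) (M - t - 1) hsub
        (fun i hi j hj hij =>
          hpair i (Finset.mem_of_mem_erase hi) j (Finset.mem_of_mem_erase hj) hij)
      have hcard : (S.erase i0).card = S.card - 1 := Finset.card_erase_of_mem hi0
      obtain ⟨i, hi⟩ : (S.erase i0).Nonempty := by
        rw [← Finset.card_pos, hcard]; omega
      have h1 := hSN (Finset.mem_of_mem_erase hi); rw [Finset.mem_Icc] at h1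
      have h2 : i + t + 1 ≤ M := by
        rcases hspec i (Finset.mem_of_mem_erase hi) (Finset.ne_of_mem_erase hi) with h | h
        · have := S.le_max' i (Finset.mem_of_mem_erase hi); omega
        · omega
      rw [hcard] at hA
      have hsm : (S.card - 1) * t = S.card * t - t := Nat.sub_one_mul _ _
      have htt : 2 * t ≤ S.card * t := Nat.mul_le_mul_right t hcard2
      omega
    · have hMne : M ≠ i0 := fun h => hi0M h.symm
      have hsub : S.erase M ⊆ Finset.Icc 1 (M - t) := by
        intro i hi
        have hiS := Finset.mem_of_mem_erase hi
        have h1 := hSN hiS; rw [Finset.mem_Icc] at h1 ⊢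
        have hle : i ≤ M := S.le_max' i hiS
        rcases hpair i hiS M hM (Finset.ne_of_mem_erase hi) with h | h <;> omega
      have hcard : (S.erase M).card = S.card - 1 := Finset.card_erase_of_mem hM
      have hi0' : i0 ∈ S.erase M := Finset.mem_erase.mpr ⟨hi0M, hi0⟩
      have h1 := hSN hi0; rw [Finset.mem_Icc] at h1
      have hiM : i0 + t + 1 ≤ M := by
        have hle := S.le_max' i0 hi0
        rcases hspec M hM hMne with h | h
        · exact h
        · omega
      by_cases h2 : 2 ≤ (S.erase M).card
      · have hB := ih (S.erase M) (Finset.erase_ssubset hM) (M - t) hsub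
          (fun i hi j hj hij =>
            hpair i (Finset.mem_of_mem_erase hi) j (Finset.mem_of_mem_erase hj) hij)
          i0 hi0'
          (fun j hj hji => hspec j (Finset.mem_of_mem_erase hj) hji)
          h2
        rw [hcard] at hB
        have hsm : (S.card - 1) * t = S.card * t - t := Nat.sub_one_mul _ _
        have htt : 2 * t ≤ S.card * t := Nat.mul_le_mul_right t hcard2
        omega
      · have hc2 : S.card = 2 := by omega
        have htt : S.card * t = 2 * t := by rw [hc2]
        omega

lemma upper_bound (ht : 2 ≤ t) (hn : t + 1 ≤ n) (M : Finset (Finset ℕ))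
    (hM : (pathComplex n t).IsRestrictedMatching M) : M.card * t ≤ n - 1 := by
  obtain ⟨⟨hMf, hdisj⟩, F0, hF0, hgap⟩ := hM
  have ht1 : 1 ≤ t := by omega
  have hMf' : M ⊆ (Finset.Icc 1 (n - t + 1)).image (fun i => Finset.Icc i (i + t - 1)) := by
    intro F hF
    exact (mem_facets_path ht1).mp (hMf hF)
  set S := (Finset.Icc 1 (n - t + 1)).filter
    (fun i => Finset.Icc i (i + t - 1) ∈ M) with hSdef
  have hSsub : S ⊆ Finset.Icc 1 (n - t + 1) := Finset.filter_subset _ _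
  have himg : S.image (fun i => Finset.Icc i (i + t - 1)) = M := by
    apply Finset.Subset.antisymm
    · intro F hF
      obtain ⟨i, hi, rfl⟩ := Finset.mem_image.mp hF
      exact (Finset.mem_filter.mp hi).2
    · intro F hF
      obtain ⟨i, hi, rfl⟩ := Finset.mem_image.mp (hMf' hF)
      exact Finset.mem_image_of_mem _ (Finset.mem_filter.mpr ⟨hi, hF⟩)
  have hinj : ∀ i ∈ S, ∀ j ∈ S,
      Finset.Icc i (i + t - 1) = Finset.Icc j (j + t - 1) → i = j := by
    intro i _ j _ h
    exact start_eq_of_subset ht1 (by rw [h])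
  have hmemM : ∀ i ∈ S, Finset.Icc i (i + t - 1) ∈ M := by
    intro i hi
    exact (Finset.mem_filter.mp hi).2
  obtain ⟨i0, hi0S, hi0⟩ : ∃ i0 ∈ S, Finset.Icc i0 (i0 + t - 1) = F0 := by
    rw [← himg] at hF0
    obtain ⟨i0, hi0S, hi0⟩ := Finset.mem_image.mp hF0
    exact ⟨i0, hi0S, hi0⟩
  have hpair : ∀ i ∈ S, ∀ j ∈ S, i ≠ j → i + t ≤ j ∨ j + t ≤ i := by
    intro i hi j hj hij
    have hne : Finset.Icc i (i + t - 1) ≠ Finset.Icc j (j + t - 1) :=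
      fun h => hij (hinj i hi j hj h)
    exact (inter_empty_iff ht1 i j).mp (hdisj _ (hmemM i hi) _ (hmemM j hj) hne)
  have hspec : ∀ j ∈ S, j ≠ i0 → i0 + t + 1 ≤ j ∨ j + t + 1 ≤ i0 := by
    intro j hj hji
    have hne : Finset.Icc j (j + t - 1) ≠ F0 := by
      rw [← hi0]
      exact fun h => hji (hinj j hj i0 hi0S h)
    have hg := hgap _ (hmemM j hj) hne
    rw [← hi0] at hg
    exact formGap_start ht (hSsub hi0S) (hSsub hj) (fun h => hji h.symm) hg
  have hcardeq : M.card = S.card := by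
    rw [← himg]
    exact Finset.card_image_of_injOn fun i hi j hj h => hinj i hi j hj h
  rw [hcardeq]
  by_cases hc : 2 ≤ S.card
  · have := lemB t ht1 S (n - t + 1) hSsub hpair i0 hi0S hspec hc
    omega
  · have hle : S.card ≤ 1 := by omega
    have := Nat.mul_le_mul_right t hle
    omega

/-- The starts in the optimal restricted matching. -/
def startFn (t : ℕ) : ℕ → ℕ := fun j => if j = 0 then 1 else j * t + 2

lemma startFn_zero (t : ℕ) : startFn t 0 = 1 := rfl

lemma startFn_pos (t : ℕ) {j : ℕ} (hj : j ≠ 0) : startFn t j = j * t + 2 := if_neg hj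

lemma lower_bound (ht : 2 ≤ t) (hn : t + 1 ≤ n) :
    ∃ M : Finset (Finset ℕ),
      (pathComplex n t).IsRestrictedMatching M ∧ M.card = (n - 1) / t := by
  have ht1 : 1 ≤ t := by omega
  set k := (n - 1) / t with hk
  have hk1 : 1 ≤ k := by
    rw [hk]
    exact (Nat.one_le_div_iff (by omega)).mpr (by omega)
  have hkt : k * t ≤ n - 1 := by rw [hk]; exact Nat.div_mul_le_self _ _
  have hsmem : ∀ j < k, startFn t j ∈ Finset.Icc 1 (n - t + 1) := by
    intro j hj
    rw [Finset.mem_Icc]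
    by_cases h0 : j = 0
    · subst h0; rw [startFn_zero]; omega
    · rw [startFn_pos t h0]
      have h1 : j * t ≤ (k - 1) * t := Nat.mul_le_mul_right t (by omega)
      have h2 : (k - 1) * t = k * t - t := Nat.sub_one_mul _ _
      have h3 : 1 * t ≤ k * t := Nat.mul_le_mul_right t hk1
      omega
  have hgapfact : ∀ j1 j2 : ℕ, j1 < j2 → startFn t j1 + t ≤ startFn t j2 := by
    intro j1 j2 h
    by_cases h0 : j1 = 0
    · subst h0
      rw [startFn_zero, startFn_pos t (by omega)]
      have : 1 * t ≤ j2 * t := Nat.mul_le_mul_right t (by omega)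
      omega
    · rw [startFn_pos t h0, startFn_pos t (by omega : j2 ≠ 0)]
      have h1 : (j1 + 1) * t ≤ j2 * t := Nat.mul_le_mul_right t (by omega)
      have h2 : (j1 + 1) * t = j1 * t + t := by ring
      omega
  have hspecgap : ∀ j : ℕ, j ≠ 0 → startFn t 0 + t + 1 ≤ startFn t j := by
    intro j hj
    rw [startFn_zero, startFn_pos t hj]
    have : 1 * t ≤ j * t := Nat.mul_le_mul_right t (by omega)
    omega
  have hSinj : ∀ j1 ∈ Finset.range k, ∀ j2 ∈ Finset.range k,
      Finset.Icc (startFn t j1) (startFn t j1 + t - 1) =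
        Finset.Icc (startFn t j2) (startFn t j2 + t - 1) → j1 = j2 := by
    intro j1 _ j2 _ h
    have hse : startFn t j1 = startFn t j2 := start_eq_of_subset ht1 (by rw [h])
    rcases lt_trichotomy j1 j2 with hlt | he | hlt
    · have := hgapfact j1 j2 hlt; omega
    · exact he
    · have := hgapfact j2 j1 hlt; omega
  refine ⟨(Finset.range k).image
      (fun j => Finset.Icc (startFn t j) (startFn t j + t - 1)), ⟨⟨?_, ?_⟩, ?_⟩, ?_⟩
  · intro F hF
    obtain ⟨j, hj, rfl⟩ := Finset.mem_image.mp hF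
    exact (mem_facets_path ht1).mpr
      (Finset.mem_image.mpr ⟨_, hsmem j (Finset.mem_range.mp hj), rfl⟩)
  · intro F hF G hG hne
    obtain ⟨j1, hj1, rfl⟩ := Finset.mem_image.mp hF
    obtain ⟨j2, hj2, rfl⟩ := Finset.mem_image.mp hG
    rcases lt_trichotomy j1 j2 with hlt | he | hlt
    · exact (inter_empty_iff ht1 _ _).mpr (Or.inl (hgapfact j1 j2 hlt))
    · exact absurd (by rw [he]) hne
    · exact (inter_empty_iff ht1 _ _).mpr (Or.inr (hgapfact j2 j1 hlt))
  · refine ⟨Finset.Icc (startFn t 0) (startFn t 0 + t - 1),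
      Finset.mem_image_of_mem _ (Finset.mem_range.mpr (by omega)), ?_⟩
    intro G hG hne
    obtain ⟨j, hj, rfl⟩ := Finset.mem_image.mp hG
    have hj0 : j ≠ 0 := by
      intro h
      subst h
      exact hne rfl
    exact formGap_of ht (hsmem 0 (by omega)) (hsmem j (Finset.mem_range.mp hj))
      (hspecgap j hj0)
  · rw [Finset.card_image_of_injOn fun j1 h1 j2 h2 h => hSinj j1 h1 j2 h2 h,
      Finset.card_range]

end PathAux

/-- `ν₀(Γ_{n,t}) = ⌊(n - 1) / t⌋` for `n ≥ t + 1`. -/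
theorem restrictedMatchingNumber_pathComplex (n t : ℕ) (ht : 2 ≤ t) (hn : t + 1 ≤ n) :
    (pathComplex n t).restrictedMatchingNumber = (n - 1) / t := by
  rw [SimplicialComplex.restrictedMatchingNumber]
  have ht0 : 0 < t := by omega
  obtain ⟨M0, hM0, hc0⟩ := PathAux.lower_bound ht hn
  have hmem : (n - 1) / t ∈
      {r : ℕ | ∃ M : Finset (Finset ℕ),
        (pathComplex n t).IsRestrictedMatching M ∧ M.card = r} := ⟨M0, hM0, hc0⟩
  have hub : ∀ r ∈ {r : ℕ | ∃ M : Finset (Finset ℕ),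
      (pathComplex n t).IsRestrictedMatching M ∧ M.card = r}, r ≤ (n - 1) / t := by
    rintro r ⟨M, hM, rfl⟩
    rw [Nat.le_div_iff_mul_le ht0]
    exact PathAux.upper_bound ht hn M hM
  exact le_antisymm (csSup_le ⟨_, hmem⟩ hub) (le_csSup ⟨_, hub⟩ hmem)

end
end

section
/- For all integers 2 ≤ t ≤ n, the induced matching number of the t-path simplicial tree of the path graph P_n satisfies ν₁(Γ_{n,t}) = ⌈(n − t + 1)/(t + 1)⌉. -/
noncomputable section

open Finset MvPolynomial

private lemma facet_card {i t : ℕ} (hi : 1 ≤ i) (ht : 1 ≤ t) :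
    (Finset.Icc i (i + t - 1)).card = t := by
  rw [Nat.card_Icc]; omega

private lemma facet_inj {i j t : ℕ} (hi : 1 ≤ i) (hj : 1 ≤ j) (ht : 1 ≤ t)
    (h : Finset.Icc i (i + t - 1) = Finset.Icc j (j + t - 1)) : i = j := by
  have h1 : i ∈ Finset.Icc j (j + t - 1) := by
    rw [← h]; exact Finset.mem_Icc.mpr ⟨le_refl i, by omega⟩
  have h2 : j ∈ Finset.Icc i (i + t - 1) := by
    rw [h]; exact Finset.mem_Icc.mpr ⟨le_refl j, by omega⟩
  rw [Finset.mem_Icc] at h1 h2; omega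

private lemma mem_pathFacets {n t : ℕ} {F : Finset ℕ} :
    F ∈ pathFacets n t ↔ ∃ i, (1 ≤ i ∧ i ≤ n - t + 1) ∧ F = Finset.Icc i (i + t - 1) := by
  simp only [pathFacets, Finset.mem_image, Finset.mem_Icc]
  constructor
  · rintro ⟨i, hi, rfl⟩; exact ⟨i, hi, rfl⟩
  · rintro ⟨i, hi, rfl⟩; exact ⟨i, hi, rfl⟩

private lemma mem_faces_pathComplex {n t : ℕ} {F : Finset ℕ} :
    F ∈ (pathComplex n t).faces ↔ F = ∅ ∨ ∃ A ∈ pathFacets n t, F ⊆ A := by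
  simp [pathComplex, ofFacets, Finset.mem_biUnion, Finset.mem_powerset]

private lemma facets_pathComplex {n t : ℕ} (ht : 1 ≤ t) :
    (pathComplex n t).facets = pathFacets n t := by
  classical
  have hone : Finset.Icc 1 (1 + t - 1) ∈ pathFacets n t :=
    mem_pathFacets.mpr ⟨1, ⟨le_refl 1, by omega⟩, rfl⟩
  ext F
  simp only [SimplicialComplex.facets, Finset.mem_filter]
  constructor
  · rintro ⟨hF, hmax⟩
    rcases mem_faces_pathComplex.mp hF with rfl | ⟨A, hA, hFA⟩
    · exfalso
      have hAf : Finset.Icc 1 (1 + t - 1) ∈ (pathComplex n t).faces :=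
        mem_faces_pathComplex.mpr (Or.inr ⟨_, hone, le_refl _⟩)
      have := hmax _ hAf (Finset.empty_subset _)
      have h1 : (1 : ℕ) ∈ Finset.Icc 1 (1 + t - 1) := Finset.mem_Icc.mpr ⟨le_refl 1, by omega⟩
      rw [← this] at h1
      exact absurd h1 (Finset.notMem_empty 1)
    · have hAf : A ∈ (pathComplex n t).faces :=
        mem_faces_pathComplex.mpr (Or.inr ⟨_, hA, le_refl _⟩)
      have := hmax _ hAf hFA
      rw [this]; exact hA
  · intro hF
    rcases mem_pathFacets.mp hF with ⟨i, hi, rfl⟩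
    refine ⟨mem_faces_pathComplex.mpr (Or.inr ⟨_, hF, le_refl _⟩), ?_⟩
    intro G hG hFG
    rcases mem_faces_pathComplex.mp hG with rfl | ⟨B, hB, hGB⟩
    · exact Finset.subset_empty.mp hFG
    · rcases mem_pathFacets.mp hB with ⟨j, hj, rfl⟩
      have hcard : (Finset.Icc i (i + t - 1)).card = (Finset.Icc j (j + t - 1)).card := by
        rw [facet_card hi.1 ht, facet_card hj.1 ht]
      have heq : Finset.Icc i (i + t - 1) = Finset.Icc j (j + t - 1) :=
        Finset.eq_of_subset_of_card_le (hFG.trans hGB) (le_of_eq hcard.symm)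
      exact Finset.Subset.antisymm hFG (heq ▸ hGB)

/-- `ν₁(Γ_{n,t}) = ⌈(n - t + 1) / (t + 1)⌉`, the ceiling being
written as `((n - t + 1) + (t + 1) - 1) / (t + 1)` in natural number
arithmetic. -/
theorem inducedMatchingNumber_pathComplex (n t : ℕ) (ht : 2 ≤ t) (htn : t ≤ n) :
    (pathComplex n t).inducedMatchingNumber = ((n - t + 1) + (t + 1) - 1) / (t + 1) := by
  classical
  set m := n - t + 1 with hm
  have hm1 : 1 ≤ m := by omega
  have ht1 : 1 ≤ t := by omega
  have hfac := facets_pathComplex (n := n) (t := t) ht1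
  set k := (m - 1) / (t + 1) + 1 with hk
  have hgoal : m + (t + 1) - 1 = (m - 1) + (t + 1) := by omega
  have hgoal2 : (m + (t + 1) - 1) / (t + 1) = k := by
    rw [hgoal, Nat.add_div_right _ (by omega)]
  rw [hgoal2]
  -- Upper bound: every induced matching has at most k facets
  have upper : ∀ M : Finset (Finset ℕ), (pathComplex n t).IsInducedMatching M →
      M.card ≤ k := by
    intro M hM
    obtain ⟨⟨hMfac, hMdisj⟩, hMind⟩ := hM
    set I : Finset ℕ := (Finset.Icc 1 m).filter
      (fun i => Finset.Icc i (i + t - 1) ∈ M) with hI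
    have hIdx : ∀ i ∈ I, 1 ≤ i ∧ i ≤ m ∧ Finset.Icc i (i + t - 1) ∈ M := by
      intro i hi
      rw [hI, Finset.mem_filter, Finset.mem_Icc] at hi
      exact ⟨hi.1.1, hi.1.2, hi.2⟩
    have hMeq : M = I.image (fun i => Finset.Icc i (i + t - 1)) := by
      ext F
      constructor
      · intro hF
        have hFfac : F ∈ pathFacets n t := hfac ▸ hMfac hF
        rcases mem_pathFacets.mp hFfac with ⟨i, hi, rfl⟩
        exact Finset.mem_image.mpr ⟨i, by
          rw [hI, Finset.mem_filter, Finset.mem_Icc]; exact ⟨⟨hi.1, hi.2⟩, hF⟩, rfl⟩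
      · intro hF
        rcases Finset.mem_image.mp hF with ⟨i, hi, rfl⟩
        exact (hIdx i hi).2.2
    have hcard : M.card = I.card := by
      rw [hMeq]
      apply Finset.card_image_of_injOn
      intro i hi j hj hij
      exact facet_inj (hIdx i hi).1 (hIdx j hj).1 ht1 hij
    rw [hcard]
    -- gap property
    have hgap : ∀ i ∈ I, ∀ j ∈ I, i < j → i + t + 1 ≤ j := by
      intro i hi j hj hij
      obtain ⟨hi1, him, hiM⟩ := hIdx i hi
      obtain ⟨hj1, hjm, hjM⟩ := hIdx j hj
      have hne : Finset.Icc i (i + t - 1) ≠ Finset.Icc j (j + t - 1) := by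
        intro h; exact absurd (facet_inj hi1 hj1 ht1 h) (Nat.ne_of_lt hij)
      have hdis := hMdisj _ hiM _ hjM hne
      -- disjointness forces j ≥ i + t
      have hjt : i + t ≤ j := by
        by_contra hlt
        push_neg at hlt
        have : j ∈ Finset.Icc i (i + t - 1) ∩ Finset.Icc j (j + t - 1) := by
          rw [Finset.mem_inter, Finset.mem_Icc, Finset.mem_Icc]
          exact ⟨⟨le_of_lt hij, by omega⟩, ⟨le_refl j, by omega⟩⟩
        rw [hdis] at this
        exact absurd this (Finset.notMem_empty j)
      -- rule out j = i + t
      by_contra hle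
      push_neg at hle
      have hjeq : j = i + t := by omega
      -- the facet at index i+1 is in the union
      have hHfac : Finset.Icc (i+1) (i+1 + t - 1) ∈ (pathComplex n t).facets := by
        rw [hfac]
        exact mem_pathFacets.mpr ⟨i + 1, ⟨by omega, by omega⟩, rfl⟩
      have hHsub : Finset.Icc (i+1) (i+1 + t - 1) ⊆ M.biUnion id := by
        intro x hx
        rw [Finset.mem_Icc] at hx
        rw [Finset.mem_biUnion]
        by_cases hxc : x ≤ i + t - 1
        · exact ⟨_, hiM, by rw [id]; exact Finset.mem_Icc.mpr ⟨by omega, hxc⟩⟩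
        · exact ⟨_, hjM, by rw [id]; exact Finset.mem_Icc.mpr ⟨by omega, by omega⟩⟩
      have hHM := hMind _ hHfac hHsub
      have hne' : Finset.Icc (i+1) (i+1 + t - 1) ≠ Finset.Icc i (i + t - 1) := by
        intro h; have := facet_inj (by omega) hi1 ht1 h; omega
      have hdis' := hMdisj _ hHM _ hiM hne'
      have : i + 1 ∈ Finset.Icc (i+1) (i+1 + t - 1) ∩ Finset.Icc i (i + t - 1) := by
        rw [Finset.mem_inter, Finset.mem_Icc, Finset.mem_Icc]
        exact ⟨⟨le_refl _, by omega⟩, ⟨by omega, by omega⟩⟩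
      rw [hdis'] at this
      exact absurd this (Finset.notMem_empty _)
    -- injective map into range k
    have : I.card ≤ (Finset.range k).card := by
      apply Finset.card_le_card_of_injOn (fun i => (i - 1) / (t + 1))
      · intro i hi
        show (i - 1) / (t + 1) ∈ Finset.range k
        rw [Finset.mem_range, hk]
        have h1 := (hIdx i hi).2.1
        have h2 : (i - 1) / (t + 1) ≤ (m - 1) / (t + 1) :=
          Nat.div_le_div_right (by omega)
        omega
      · intro i hi j hj hij
        dsimp only at hij
        by_contra hne
        rcases Nat.lt_or_ge i j with hlt | hge
        · have hg := hgap i hi j hj hlt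
          have hi1 := (hIdx i hi).1
          have : (i - 1) / (t + 1) + 1 ≤ (j - 1) / (t + 1) := by
            have h0 : i - 1 + (t + 1) ≤ j - 1 := by omega
            have h1 : (i - 1 + (t + 1)) / (t + 1) ≤ (j - 1) / (t + 1) :=
              Nat.div_le_div_right h0
            rwa [Nat.add_div_right _ (by omega)] at h1
          omega
        · have hlt : j < i := by omega
          have hg := hgap j hj i hi hlt
          have hj1 := (hIdx j hj).1
          have : (j - 1) / (t + 1) + 1 ≤ (i - 1) / (t + 1) := by
            have h0 : j - 1 + (t + 1) ≤ i - 1 := by omega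
            have h1 : (j - 1 + (t + 1)) / (t + 1) ≤ (i - 1) / (t + 1) :=
              Nat.div_le_div_right h0
            rwa [Nat.add_div_right _ (by omega)] at h1
          omega
    simpa using this
  -- Lower bound: explicit induced matching of size k
  set M₀ : Finset (Finset ℕ) := (Finset.range k).image
    (fun j => Finset.Icc (1 + (t+1)*j) (1 + (t+1)*j + t - 1)) with hM₀
  have hidx_le : ∀ j < k, 1 + (t+1)*j ≤ m := by
    intro j hj
    have hj' : j ≤ (m - 1) / (t + 1) := by omega
    have h1 : (t+1) * j ≤ (t+1) * ((m-1)/(t+1)) := Nat.mul_le_mul_left _ hj'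
    have h2 : (t+1) * ((m-1)/(t+1)) ≤ m - 1 := Nat.mul_div_le (m-1) (t+1)
    omega
  have hM₀card : M₀.card = k := by
    rw [hM₀, Finset.card_image_of_injOn, Finset.card_range]
    intro a ha b hb hab
    have := facet_inj (i := 1 + (t+1)*a) (j := 1 + (t+1)*b) (by omega) (by omega) ht1 hab
    have ht0 : 0 < t + 1 := by omega
    exact Nat.eq_of_mul_eq_mul_left ht0 (by omega)
  have hM₀mem : ∀ F ∈ M₀, ∃ j, j < k ∧ F = Finset.Icc (1 + (t+1)*j) (1 + (t+1)*j + t - 1) := by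
    intro F hF
    rcases Finset.mem_image.mp hF with ⟨j, hj, rfl⟩
    exact ⟨j, Finset.mem_range.mp hj, rfl⟩
  have hM₀ind : (pathComplex n t).IsInducedMatching M₀ := by
    refine ⟨⟨?_, ?_⟩, ?_⟩
    · intro F hF
      rcases hM₀mem F hF with ⟨j, hj, rfl⟩
      rw [hfac]
      exact mem_pathFacets.mpr ⟨1 + (t+1)*j, ⟨by omega, hidx_le j hj⟩, rfl⟩
    · intro F hF G hG hne
      rcases hM₀mem F hF with ⟨a, ha, rfl⟩
      rcases hM₀mem G hG with ⟨b, hb, rfl⟩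
      have hab : a ≠ b := by rintro rfl; exact hne rfl
      rw [Finset.eq_empty_iff_forall_notMem]
      intro x hx
      rw [Finset.mem_inter, Finset.mem_Icc, Finset.mem_Icc] at hx
      rcases Nat.lt_or_ge a b with hlt | hge
      · have : (t+1)*a + (t+1) ≤ (t+1)*b := by
          have := Nat.mul_le_mul_left (t+1) (Nat.succ_le_of_lt hlt)
          rw [Nat.mul_succ] at this; exact this
        omega
      · have hlt : b < a := by omega
        have : (t+1)*b + (t+1) ≤ (t+1)*a := by
          have := Nat.mul_le_mul_left (t+1) (Nat.succ_le_of_lt hlt)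
          rw [Nat.mul_succ] at this; exact this
        omega
    · intro H hHfac hHsub
      rw [hfac] at hHfac
      rcases mem_pathFacets.mp hHfac with ⟨i, hi, rfl⟩
      -- i lies in some block
      have hiU : i ∈ M₀.biUnion id := hHsub (Finset.mem_Icc.mpr ⟨le_refl i, by omega⟩)
      rcases Finset.mem_biUnion.mp hiU with ⟨F, hF, hiF⟩
      rcases hM₀mem F hF with ⟨j, hj, rfl⟩
      rw [id, Finset.mem_Icc] at hiF
      set a := 1 + (t+1)*j with ha
      -- claim i = a
      by_cases hieq : i = a
      · subst hieq; exact hF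
      · exfalso
        have hia : a < i := by omega
        -- then a + t ∈ H ⊆ union
        have hmem : a + t ∈ Finset.Icc i (i + t - 1) := Finset.mem_Icc.mpr ⟨by omega, by omega⟩
        have hU := hHsub hmem
        rcases Finset.mem_biUnion.mp hU with ⟨G, hG, hgF⟩
        rcases hM₀mem G hG with ⟨l, hl, rfl⟩
        rw [id, Finset.mem_Icc] at hgF
        -- 1 + (t+1)l ≤ a + t ≤ 1 + (t+1)l + t - 1
        have h1 : (t+1)*l ≤ (t+1)*j + t := by omega
        have h2 : (t+1)*j + 1 ≤ (t+1)*l := by omega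
        have hlj : l ≤ j := by
          by_contra hc
          push_neg at hc
          have := Nat.mul_le_mul_left (t+1) (Nat.succ_le_of_lt hc)
          rw [Nat.mul_succ] at this
          omega
        have hjl : j < l := by
          by_contra hc
          push_neg at hc
          have := Nat.mul_le_mul_left (t+1) hc
          omega
        omega
  -- conclude via sSup
  have hkS : k ∈ {r : ℕ | ∃ M : Finset (Finset ℕ),
      (pathComplex n t).IsInducedMatching M ∧ M.card = r} := ⟨M₀, hM₀ind, hM₀card⟩
  have hbdd : ∀ r ∈ {r : ℕ | ∃ M : Finset (Finset ℕ),
      (pathComplex n t).IsInducedMatching M ∧ M.card = r}, r ≤ k := by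
    rintro r ⟨M, hM, rfl⟩
    exact upper M hM
  rw [SimplicialComplex.inducedMatchingNumber]
  exact le_antisymm (csSup_le ⟨k, hkS⟩ hbdd) (le_csSup ⟨k, hbdd⟩ hkS)

end
end
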